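/- arXiv:1210.4991 — 4 statements merged into one kernel-verified Lean document; each statement's English description precedes it below -/
import Mathlib

section
/- The polynomial x⁵ − 2x⁴ − 10x³ + 23x² − 6x − 4 over ℚ has invariants satisfying δ = 25Δ/A² = (5/13)², where A and Δ are the degree-4 invariant and the discriminant-invariant of the associated binary quintic. -/
/- Cayley Ω-process, transvectants, and the invariants of the binary quintic,
over a field K. Variables in `Fin 10`: 0..5 are the coefficients a₀,…,a₅;
6 = x (and x₁), 7 = y (and y₁); 8 = x₂; 9 = y₂. -/

open MvPolynomial

set_option maxHeartbeats 1600000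

variable {K : Type*} [Field K]

/-- The Cayley operator Ω = ∂²/∂x₁∂y₂ − ∂²/∂x₂∂y₁. -/
noncomputable def Omega (w : MvPolynomial (Fin 10) K) : MvPolynomial (Fin 10) K :=
  pderiv 6 (pderiv 9 w) - pderiv 8 (pderiv 7 w)

/-- Rename the variables x,y (6,7) of a form to x₂,y₂ (8,9). -/
noncomputable def toSecond (g : MvPolynomial (Fin 10) K) : MvPolynomial (Fin 10) K :=
  bind₁ (fun i => if i = 6 then X 8 else if i = 7 then X 9 else X i) g

/-- Substitute x₁ = x₂ = x, y₁ = y₂ = y at the end of the Ω-process. -/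
noncomputable def collapse (w : MvPolynomial (Fin 10) K) : MvPolynomial (Fin 10) K :=
  bind₁ (fun i => if i = 8 then X 6 else if i = 9 then X 7 else X i) w

/-- The m-th transvectant (f,g)^m via Cayley's Ω-process. -/
noncomputable def transvectant (m : ℕ) (f g : MvPolynomial (Fin 10) K) :
    MvPolynomial (Fin 10) K :=
  collapse (Omega^[m] (f * toSecond g))

/-- The generic binary quintic f = a₀x⁵ + a₁x⁴y + a₂x³y² + a₃x²y³ + a₄xy⁴ + a₅y⁵. -/
noncomputable def genQuintic : MvPolynomial (Fin 10) K :=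
  X 0 * X 6 ^ 5 + X 1 * X 6 ^ 4 * X 7 + X 2 * X 6 ^ 3 * X 7 ^ 2 +
    X 3 * X 6 ^ 2 * X 7 ^ 3 + X 4 * X 6 * X 7 ^ 4 + X 5 * X 7 ^ 5

/-- The covariant i = (f,f)⁴/288, of order 2 and degree 2. -/
noncomputable def covI : MvPolynomial (Fin 10) K :=
  C (288 : K)⁻¹ * transvectant 4 genQuintic genQuintic

/-- The covariant H = (f,f)²/16, of order 6 and degree 2. -/
noncomputable def covH : MvPolynomial (Fin 10) K :=
  C (16 : K)⁻¹ * transvectant 2 genQuintic genQuintic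

/-- The covariant j = −(f,i)²/12, of order 3 and degree 3. -/
noncomputable def covJ : MvPolynomial (Fin 10) K :=
  -(C (12 : K)⁻¹ * transvectant 2 genQuintic covI)

/-- The invariant A = (i,i)²/32, of degree 4. -/
noncomputable def invA : MvPolynomial (Fin 10) K :=
  C (32 : K)⁻¹ * transvectant 2 covI covI

/-- The covariant τ = (j,j)²/16, of order 2 and degree 6. -/
noncomputable def covTau : MvPolynomial (Fin 10) K :=
  C (16 : K)⁻¹ * transvectant 2 covJ covJ

/-- The invariant B = (τ,i)²/8, of degree 8. -/
noncomputable def invB : MvPolynomial (Fin 10) K :=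
  C (8 : K)⁻¹ * transvectant 2 covTau covI

/-- The invariant Δ = (A²−4B)/125, of degree 8 (the discriminant). -/
noncomputable def invDelta : MvPolynomial (Fin 10) K :=
  C (125 : K)⁻¹ * (invA ^ 2 - 4 * invB)

/-- The invariant C = (τ,τ)²/6, of degree 12. -/
noncomputable def invC : MvPolynomial (Fin 10) K :=
  C (6 : K)⁻¹ * transvectant 2 covTau covTau

/-- The invariant M = (−9C + 2000AΔ + 1008A³)/25, of degree 12. -/
noncomputable def invM : MvPolynomial (Fin 10) K :=
  C (25 : K)⁻¹ * (-9 * invC + 2000 * invA * invDelta + 1008 * invA ^ 3)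


section Aux

noncomputable def sigEx : Fin 10 → MvPolynomial (Fin 10) ℚ := fun i =>
  if i = 0 then C 1 else if i = 1 then C (-2) else if i = 2 then C (-10)
  else if i = 3 then C 23 else if i = 4 then C (-6) else if i = 5 then C (-4) else X i

lemma pderiv_sigEx {j : Fin 10} (hj : j = 6 ∨ j = 7 ∨ j = 8 ∨ j = 9)
    (p : MvPolynomial (Fin 10) ℚ) :
    pderiv j (bind₁ sigEx p) = bind₁ sigEx (pderiv j p) := by
  induction p using MvPolynomial.induction_on with
  | C a => simp
  | add p q hp hq => simp [map_add, hp, hq]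
  | mul_X p i hp =>
    have hσ : pderiv j (sigEx i) = bind₁ sigEx (pderiv j (X i)) := by
      rcases eq_or_ne i j with rfl | hne
      · have : sigEx i = X i := by
          rcases hj with rfl | rfl | rfl | rfl <;> simp [sigEx]
        simp [this]
      · rw [pderiv_X_of_ne hne]
        fin_cases i <;> rcases hj with rfl | rfl | rfl | rfl <;>
          simp_all [sigEx, pderiv_X_of_ne]
    simp only [map_mul, pderiv_mul, map_add, bind₁_X_right, hp, hσ]

lemma Omega_sigEx (p : MvPolynomial (Fin 10) ℚ) :
    Omega (bind₁ sigEx p) = bind₁ sigEx (Omega p) := by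
  simp only [Omega, map_sub, pderiv_sigEx (Or.inl rfl),
    pderiv_sigEx (Or.inr (Or.inl rfl)), pderiv_sigEx (Or.inr (Or.inr (Or.inl rfl))),
    pderiv_sigEx (Or.inr (Or.inr (Or.inr rfl)))]

lemma OmegaIter_sigEx (m : ℕ) (p : MvPolynomial (Fin 10) ℚ) :
    Omega^[m] (bind₁ sigEx p) = bind₁ sigEx (Omega^[m] p) := by
  induction m generalizing p with
  | zero => simp
  | succ n ih =>
    rw [Function.iterate_succ_apply, Function.iterate_succ_apply, Omega_sigEx, ih]

lemma toSecond_sigEx (p : MvPolynomial (Fin 10) ℚ) :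
    toSecond (bind₁ sigEx p) = bind₁ sigEx (toSecond p) := by
  simp only [toSecond, bind₁_bind₁]
  exact congrArg (fun s => bind₁ s p)
    (funext fun i => by fin_cases i <;> simp [sigEx])

lemma collapse_sigEx (p : MvPolynomial (Fin 10) ℚ) :
    collapse (bind₁ sigEx p) = bind₁ sigEx (collapse p) := by
  simp only [collapse, bind₁_bind₁]
  exact congrArg (fun s => bind₁ s p)
    (funext fun i => by fin_cases i <;> simp [sigEx])

lemma transvectant_sigEx (m : ℕ) (f g : MvPolynomial (Fin 10) ℚ) :
    bind₁ sigEx (transvectant m f g) = transvectant m (bind₁ sigEx f) (bind₁ sigEx g) := by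
  rw [transvectant, transvectant, ← collapse_sigEx, ← OmegaIter_sigEx, map_mul, toSecond_sigEx]

end Aux

section Comp

noncomputable def qEx : MvPolynomial (Fin 10) ℚ :=
  X 6 ^ 5 - 2 * X 6 ^ 4 * X 7 - 10 * X 6 ^ 3 * X 7 ^ 2 + 23 * X 6 ^ 2 * X 7 ^ 3 - 6 * X 6 * X 7 ^ 4 - 4 * X 7 ^ 5

noncomputable def iEx : MvPolynomial (Fin 10) ℚ :=
  548 * X 6 ^ 2 - 1004 * X 6 * X 7 + 1267 * X 7 ^ 2

noncomputable def jEx : MvPolynomial (Fin 10) ℚ :=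
  -1058 * X 6 ^ 3 + 2504 * X 6 ^ 2 * X 7 - 3846 * X 6 * X 7 ^ 2 + 1609 * X 7 ^ 3

noncomputable def tEx : MvPolynomial (Fin 10) ℚ :=
  2968594 * X 6 ^ 2 - 2845257 * X 6 * X 7 - 1352454 * X 7 ^ 2

lemma pderiv_ofNatQ (j : Fin 10) (n : ℕ) [n.AtLeastTwo] :
    pderiv j (no_index (OfNat.ofNat n) : MvPolynomial (Fin 10) ℚ) = 0 := by
  rw [← map_ofNat (C : ℚ →+* MvPolynomial (Fin 10) ℚ) n, pderiv_C]

lemma pderiv_natCastQ (j : Fin 10) (n : ℕ) :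
    pderiv j ((n : MvPolynomial (Fin 10) ℚ)) = 0 := by
  rw [← C_eq_coe_nat, pderiv_C]

noncomputable def t4qqW0 : MvPolynomial (Fin 10) ℚ :=
  X 6 ^ 5 * X 8 ^ 5 - 2 * X 6 ^ 5 * X 8 ^ 4 * X 9 - 10 * X 6 ^ 5 * X 8 ^ 3 * X 9 ^ 2 + 23 * X 6 ^ 5 * X 8 ^ 2 * X 9 ^ 3 - 6 * X 6 ^ 5 * X 8 * X 9 ^ 4 - 4 * X 6 ^ 5 * X 9 ^ 5 - 2 * X 6 ^ 4 * X 7 * X 8 ^ 5 + 4 * X 6 ^ 4 * X 7 * X 8 ^ 4 * X 9 + 20 * X 6 ^ 4 * X 7 * X 8 ^ 3 * X 9 ^ 2 - 46 * X 6 ^ 4 * X 7 * X 8 ^ 2 * X 9 ^ 3 + 12 * X 6 ^ 4 * X 7 * X 8 * X 9 ^ 4 + 8 * X 6 ^ 4 * X 7 * X 9 ^ 5 - 10 * X 6 ^ 3 * X 7 ^ 2 * X 8 ^ 5 + 20 * X 6 ^ 3 * X 7 ^ 2 * X 8 ^ 4 * X 9 + 100 * X 6 ^ 3 * X 7 ^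 2 * X 8 ^ 3 * X 9 ^ 2 - 230 * X 6 ^ 3 * X 7 ^ 2 * X 8 ^ 2 * X 9 ^ 3 + 60 * X 6 ^ 3 * X 7 ^ 2 * X 8 * X 9 ^ 4 + 40 * X 6 ^ 3 * X 7 ^ 2 * X 9 ^ 5 + 23 * X 6 ^ 2 * X 7 ^ 3 * X 8 ^ 5 - 46 * X 6 ^ 2 * X 7 ^ 3 * X 8 ^ 4 * X 9 - 230 * X 6 ^ 2 * X 7 ^ 3 * X 8 ^ 3 * X 9 ^ 2 + 529 * X 6 ^ 2 * X 7 ^ 3 * X 8 ^ 2 * X 9 ^ 3 - 138 * X 6 ^ 2 * X 7 ^ 3 * X 8 * X 9 ^ 4 - 92 * X 6 ^ 2 * X 7 ^ 3 * X 9 ^ 5 - 6 * X 6 * X 7 ^ 4 * X 8 ^ 5 + 12 * X 6 * X 7 ^ 4 * X 8 ^ 4 * X 9 + 60 * X 6 * X 7 ^ 4 * X 8 ^ 3 * X 9 ^ 2 - 138 * X 6 * X 7 ^ 4 * X 8 ^ 2 * X 9 ^ 3 + 36 * X 6 * X 7 ^ 4 * X 8 * X 9 ^ 4 + 24 * X 6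 * X 7 ^ 4 * X 9 ^ 5 - 4 * X 7 ^ 5 * X 8 ^ 5 + 8 * X 7 ^ 5 * X 8 ^ 4 * X 9 + 40 * X 7 ^ 5 * X 8 ^ 3 * X 9 ^ 2 - 92 * X 7 ^ 5 * X 8 ^ 2 * X 9 ^ 3 + 24 * X 7 ^ 5 * X 8 * X 9 ^ 4 + 16 * X 7 ^ 5 * X 9 ^ 5

noncomputable def t4qqW1 : MvPolynomial (Fin 10) ℚ :=
  -116 * X 6 ^ 4 * X 8 ^ 3 * X 9 + 285 * X 6 ^ 4 * X 8 ^ 2 * X 9 ^ 2 - 28 * X 6 ^ 4 * X 8 * X 9 ^ 3 - 112 * X 6 ^ 4 * X 9 ^ 4 + 116 * X 6 ^ 3 * X 7 * X 8 ^ 4 - 1152 * X 6 ^ 3 * X 7 * X 8 ^ 2 * X 9 ^ 2 + 1112 * X 6 ^ 3 * X 7 * X 8 * X 9 ^ 3 + 40 * X 6 ^ 3 * X 7 * X 9 ^ 4 - 285 * X 6 ^ 2 * X 7 ^ 2 * X 8 ^ 4 + 1152 * X 6 ^ 2 * X 7 ^ 2 * X 8 ^ 3 * X 9 - 2454 * X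 6 ^ 2 * X 7 ^ 2 * X 8 * X 9 ^ 3 + 1014 * X 6 ^ 2 * X 7 ^ 2 * X 9 ^ 4 + 28 * X 6 * X 7 ^ 3 * X 8 ^ 4 - 1112 * X 6 * X 7 ^ 3 * X 8 ^ 3 * X 9 + 2454 * X 6 * X 7 ^ 3 * X 8 ^ 2 * X 9 ^ 2 - 1064 * X 6 * X 7 ^ 3 * X 9 ^ 4 + 112 * X 7 ^ 4 * X 8 ^ 4 - 40 * X 7 ^ 4 * X 8 ^ 3 * X 9 - 1014 * X 7 ^ 4 * X 8 ^ 2 * X 9 ^ 2 + 1064 * X 7 ^ 4 * X 8 * X 9 ^ 3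

noncomputable def t4qqW2 : MvPolynomial (Fin 10) ℚ :=
  -928 * X 6 ^ 3 * X 8 ^ 3 + 2280 * X 6 ^ 3 * X 8 ^ 2 * X 9 + 1968 * X 6 ^ 3 * X 8 * X 9 ^ 2 - 2904 * X 6 ^ 3 * X 9 ^ 3 + 2280 * X 6 ^ 2 * X 7 * X 8 ^ 3 - 13824 * X 6 ^ 2 * X 7 * X 8 ^ 2 * X 9 + 10008 * X 6 ^ 2 * X 7 * X 8 * X 9 ^ 2 + 5388 * X 6 ^ 2 * X 7 * X 9 ^ 3 + 1968 * X 6 * X 7 ^ 2 * X 8 ^ 3 + 10008 * X 6 * X 7 ^ 2 * X 8 ^ 2 * X 9 - 29448 * X 6 * X 7 ^ 2 * X 8 * X 9 ^ 2 + 8112 * X 6 * X 7 ^ 2 * X 9 ^ 3 - 2904 * X 7 ^ 3 * X 8 ^ 3 + 5388 * X 7 ^ 3 * X 8 ^ 2 * X 9 + 8112 * X 7 ^ 3 * X 8 * X 9 ^ 2 - 8512 * X 7 ^ 3 * X 9 ^ 3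

noncomputable def t4qqW3 : MvPolynomial (Fin 10) ℚ :=
  39456 * X 6 ^ 2 * X 8 * X 9 - 36144 * X 6 ^ 2 * X 9 ^ 2 - 39456 * X 6 * X 7 * X 8 ^ 2 + 91224 * X 6 * X 7 * X 9 ^ 2 + 36144 * X 7 ^ 2 * X 8 ^ 2 - 91224 * X 7 ^ 2 * X 8 * X 9

noncomputable def t4qqW4 : MvPolynomial (Fin 10) ℚ :=
  157824 * X 6 * X 8 - 144576 * X 6 * X 9 - 144576 * X 7 * X 8 + 364896 * X 7 * X 9

lemma t4qq_0 : qEx * toSecond qEx = t4qqW0 := by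
  simp only [toSecond, qEx, t4qqW0, map_add, map_sub, map_neg, map_mul, map_pow, map_ofNat, bind₁_X_right, Fin.reduceEq, reduceIte]
  ring

lemma t4qq_1 : Omega t4qqW0 = t4qqW1 := by
  rw [t4qqW0, t4qqW1]
  simp only [Omega, map_add, map_sub, map_neg, map_zero, map_one, pderiv_mul, pderiv_pow, pderiv_X, pderiv_ofNatQ, pderiv_natCastQ, pderiv_one, pderiv_C, Pi.single_apply, Fin.reduceEq, reduceIte, map_ofNat, Nat.cast_ofNat, mul_zero, zero_mul, mul_one, one_mul, add_zero, zero_add, neg_zero]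
  ring

lemma t4qq_2 : Omega t4qqW1 = t4qqW2 := by
  rw [t4qqW1, t4qqW2]
  simp only [Omega, map_add, map_sub, map_neg, map_zero, map_one, pderiv_mul, pderiv_pow, pderiv_X, pderiv_ofNatQ, pderiv_natCastQ, pderiv_one, pderiv_C, Pi.single_apply, Fin.reduceEq, reduceIte, map_ofNat, Nat.cast_ofNat, mul_zero, zero_mul, mul_one, one_mul, add_zero, zero_add, neg_zero]
  ring

lemma t4qq_3 : Omega t4qqW2 = t4qqW3 := by
  rw [t4qqW2, t4qqW3]
  simp only [Omega, map_add, map_sub, map_neg, map_zero, map_one, pderiv_mul, pderiv_pow, pderiv_X, pderiv_ofNatQ, pderiv_natCastQ, pderiv_one, pderiv_C, Pi.single_apply, Fin.reduceEq, reduceIte, map_ofNat, Nat.cast_ofNat, mul_zero, zero_mul, mul_one, one_mul, add_zero, zero_add, neg_zero]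
  ring

lemma t4qq_4 : Omega t4qqW3 = t4qqW4 := by
  rw [t4qqW3, t4qqW4]
  simp only [Omega, map_add, map_sub, map_neg, map_zero, map_one, pderiv_mul, pderiv_pow, pderiv_X, pderiv_ofNatQ, pderiv_natCastQ, pderiv_one, pderiv_C, Pi.single_apply, Fin.reduceEq, reduceIte, map_ofNat, Nat.cast_ofNat, mul_zero, zero_mul, mul_one, one_mul, add_zero, zero_add, neg_zero]
  ring

lemma t4qq_c : collapse t4qqW4 = C (288:ℚ) * iEx := by
  simp only [collapse, t4qqW4, iEx, jEx, tEx, map_add, map_sub, map_neg, map_mul, map_pow, map_ofNat, bind₁_X_right, Fin.reduceEq, reduceIte]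
  ring

lemma t4qq : transvectant 4 qEx qEx = C (288:ℚ) * iEx := by
  rw [transvectant, t4qq_0]
  simp only [Function.iterate_succ_apply', Function.iterate_zero_apply]
  rw [t4qq_1, t4qq_2, t4qq_3, t4qq_4, t4qq_c]

noncomputable def t2qiW0 : MvPolynomial (Fin 10) ℚ :=
  548 * X 6 ^ 5 * X 8 ^ 2 - 1004 * X 6 ^ 5 * X 8 * X 9 + 1267 * X 6 ^ 5 * X 9 ^ 2 - 1096 * X 6 ^ 4 * X 7 * X 8 ^ 2 + 2008 * X 6 ^ 4 * X 7 * X 8 * X 9 - 2534 * X 6 ^ 4 * X 7 * X 9 ^ 2 - 5480 * X 6 ^ 3 * X 7 ^ 2 * X 8 ^ 2 + 10040 * X 6 ^ 3 * X 7 ^ 2 * X 8 * X 9 - 12670 * X 6 ^ 3 * X 7 ^ 2 * X 9 ^ 2 + 12604 * X 6 ^ 2 * X 7 ^ 3 * X 8 ^ 2 - 23092 * X 6 ^ 2 * X 7 ^ 3 * X 8 * X 9 + 29141 * X 6 ^ 2 * X 7 ^ 3 * X 9 ^ 2 - 3288 * X 6 * X 7 ^ 4 * X 8 ^ 2 + 6024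 * X 6 * X 7 ^ 4 * X 8 * X 9 - 7602 * X 6 * X 7 ^ 4 * X 9 ^ 2 - 2192 * X 7 ^ 5 * X 8 ^ 2 + 4016 * X 7 ^ 5 * X 8 * X 9 - 5068 * X 7 ^ 5 * X 9 ^ 2

noncomputable def t2qiW1 : MvPolynomial (Fin 10) ℚ :=
  -2828 * X 6 ^ 4 * X 8 + 10662 * X 6 ^ 4 * X 9 + 29952 * X 6 ^ 3 * X 7 * X 8 - 40352 * X 6 ^ 3 * X 7 * X 9 - 45504 * X 6 ^ 2 * X 7 ^ 2 * X 8 - 6744 * X 6 ^ 2 * X 7 ^ 2 * X 9 - 19880 * X 6 * X 7 ^ 3 * X 8 + 92468 * X 6 * X 7 ^ 3 * X 9 + 27944 * X 7 ^ 4 * X 8 - 35284 * X 7 ^ 4 * X 9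

noncomputable def t2qiW2 : MvPolynomial (Fin 10) ℚ :=
  12696 * X 6 ^ 3 - 30048 * X 6 ^ 2 * X 7 + 46152 * X 6 * X 7 ^ 2 - 19308 * X 7 ^ 3

lemma t2qi_0 : qEx * toSecond iEx = t2qiW0 := by
  simp only [toSecond, qEx, iEx, t2qiW0, map_add, map_sub, map_neg, map_mul, map_pow, map_ofNat, bind₁_X_right, Fin.reduceEq, reduceIte]
  ring

lemma t2qi_1 : Omega t2qiW0 = t2qiW1 := by
  rw [t2qiW0, t2qiW1]
  simp only [Omega, map_add, map_sub, map_neg, map_zero, map_one, pderiv_mul, pderiv_pow, pderiv_X, pderiv_ofNatQ, pderiv_natCastQ, pderiv_one, pderiv_C, Pi.single_apply, Fin.reduceEq, reduceIte, map_ofNat, Nat.cast_ofNat, mul_zero, zero_mul, mul_one, one_mul, add_zero, zero_add, neg_zero]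
  ring

lemma t2qi_2 : Omega t2qiW1 = t2qiW2 := by
  rw [t2qiW1, t2qiW2]
  simp only [Omega, map_add, map_sub, map_neg, map_zero, map_one, pderiv_mul, pderiv_pow, pderiv_X, pderiv_ofNatQ, pderiv_natCastQ, pderiv_one, pderiv_C, Pi.single_apply, Fin.reduceEq, reduceIte, map_ofNat, Nat.cast_ofNat, mul_zero, zero_mul, mul_one, one_mul, add_zero, zero_add, neg_zero]
  ring

lemma t2qi_c : collapse t2qiW2 = C (-12:ℚ) * jEx := by
  simp only [collapse, t2qiW2, iEx, jEx, tEx, map_add, map_sub, map_neg, map_mul, map_pow, map_ofNat, bind₁_X_right, Fin.reduceEq, reduceIte]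
  ring

lemma t2qi : transvectant 2 qEx iEx = C (-12:ℚ) * jEx := by
  rw [transvectant, t2qi_0]
  simp only [Function.iterate_succ_apply', Function.iterate_zero_apply]
  rw [t2qi_1, t2qi_2, t2qi_c]

noncomputable def t2iiW0 : MvPolynomial (Fin 10) ℚ :=
  300304 * X 6 ^ 2 * X 8 ^ 2 - 550192 * X 6 ^ 2 * X 8 * X 9 + 694316 * X 6 ^ 2 * X 9 ^ 2 - 550192 * X 6 * X 7 * X 8 ^ 2 + 1008016 * X 6 * X 7 * X 8 * X 9 - 1272068 * X 6 * X 7 * X 9 ^ 2 + 694316 * X 7 ^ 2 * X 8 ^ 2 - 1272068 * X 7 ^ 2 * X 8 * X 9 + 1605289 * X 7 ^ 2 * X 9 ^ 2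

noncomputable def t2iiW1 : MvPolynomial (Fin 10) ℚ :=
  1769248 * X 6 * X 9 - 1769248 * X 7 * X 8

noncomputable def t2iiW2 : MvPolynomial (Fin 10) ℚ :=
  3538496

lemma t2ii_0 : iEx * toSecond iEx = t2iiW0 := by
  simp only [toSecond, iEx, t2iiW0, map_add, map_sub, map_neg, map_mul, map_pow, map_ofNat, bind₁_X_right, Fin.reduceEq, reduceIte]
  ring

lemma t2ii_1 : Omega t2iiW0 = t2iiW1 := by
  rw [t2iiW0, t2iiW1]
  simp only [Omega, map_add, map_sub, map_neg, map_zero, map_one, pderiv_mul, pderiv_pow, pderiv_X, pderiv_ofNatQ, pderiv_natCastQ, pderiv_one, pderiv_C, Pi.single_apply, Fin.reduceEq, reduceIte, map_ofNat, Nat.cast_ofNat, mul_zero, zero_mul, mul_one, one_mul, add_zero, zero_add, neg_zero]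
  ring

lemma t2ii_2 : Omega t2iiW1 = t2iiW2 := by
  rw [t2iiW1, t2iiW2]
  simp only [Omega, map_add, map_sub, map_neg, map_zero, map_one, pderiv_mul, pderiv_pow, pderiv_X, pderiv_ofNatQ, pderiv_natCastQ, pderiv_one, pderiv_C, Pi.single_apply, Fin.reduceEq, reduceIte, map_ofNat, Nat.cast_ofNat, mul_zero, zero_mul, mul_one, one_mul, add_zero, zero_add, neg_zero]
  ring

lemma t2ii_c : collapse t2iiW2 = C (3538496:ℚ) := by
  simp only [collapse, t2iiW2, iEx, jEx, tEx, map_add, map_sub, map_neg, map_mul, map_pow, map_ofNat, bind₁_X_right, Fin.reduceEq, reduceIte]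

lemma t2ii : transvectant 2 iEx iEx = C (3538496:ℚ) := by
  rw [transvectant, t2ii_0]
  simp only [Function.iterate_succ_apply', Function.iterate_zero_apply]
  rw [t2ii_1, t2ii_2, t2ii_c]

noncomputable def t2jjW0 : MvPolynomial (Fin 10) ℚ :=
  1119364 * X 6 ^ 3 * X 8 ^ 3 - 2649232 * X 6 ^ 3 * X 8 ^ 2 * X 9 + 4069068 * X 6 ^ 3 * X 8 * X 9 ^ 2 - 1702322 * X 6 ^ 3 * X 9 ^ 3 - 2649232 * X 6 ^ 2 * X 7 * X 8 ^ 3 + 6270016 * X 6 ^ 2 * X 7 * X 8 ^ 2 * X 9 - 9630384 * X 6 ^ 2 * X 7 * X 8 * X 9 ^ 2 + 4028936 * X 6 ^ 2 * X 7 * X 9 ^ 3 + 4069068 * X 6 * X 7 ^ 2 * X 8 ^ 3 - 9630384 * X 6 * X 7 ^ 2 * X 8 ^ 2 * X 9 + 14791716 * X 6 * X 7 ^ 2 * X 8 * X 9 ^ 2 - 6188214 * X 6 * X 7 ^ 2 * X 9 ^ 3 - 1702322 * X 7 ^ 3 * X 8 ^ 3 + 4028936 * X 7 ^ 3 * X 8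 ^ 2 * X 9 - 6188214 * X 7 ^ 3 * X 8 * X 9 ^ 2 + 2588881 * X 7 ^ 3 * X 9 ^ 3

noncomputable def t2jjW1 : MvPolynomial (Fin 10) ℚ :=
  11874376 * X 6 ^ 2 * X 8 * X 9 - 5690514 * X 6 ^ 2 * X 9 ^ 2 - 11874376 * X 6 * X 7 * X 8 ^ 2 - 5409816 * X 6 * X 7 * X 9 ^ 2 + 5690514 * X 7 ^ 2 * X 8 ^ 2 + 5409816 * X 7 ^ 2 * X 8 * X 9

noncomputable def t2jjW2 : MvPolynomial (Fin 10) ℚ :=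
  47497504 * X 6 * X 8 - 22762056 * X 6 * X 9 - 22762056 * X 7 * X 8 - 21639264 * X 7 * X 9

lemma t2jj_0 : jEx * toSecond jEx = t2jjW0 := by
  simp only [toSecond, jEx, t2jjW0, map_add, map_sub, map_neg, map_mul, map_pow, map_ofNat, bind₁_X_right, Fin.reduceEq, reduceIte]
  ring

lemma t2jj_1 : Omega t2jjW0 = t2jjW1 := by
  rw [t2jjW0, t2jjW1]
  simp only [Omega, map_add, map_sub, map_neg, map_zero, map_one, pderiv_mul, pderiv_pow, pderiv_X, pderiv_ofNatQ, pderiv_natCastQ, pderiv_one, pderiv_C, Pi.single_apply, Fin.reduceEq, reduceIte, map_ofNat, Nat.cast_ofNat, mul_zero, zero_mul, mul_one, one_mul, add_zero, zero_add, neg_zero]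
  ring

lemma t2jj_2 : Omega t2jjW1 = t2jjW2 := by
  rw [t2jjW1, t2jjW2]
  simp only [Omega, map_add, map_sub, map_neg, map_zero, map_one, pderiv_mul, pderiv_pow, pderiv_X, pderiv_ofNatQ, pderiv_natCastQ, pderiv_one, pderiv_C, Pi.single_apply, Fin.reduceEq, reduceIte, map_ofNat, Nat.cast_ofNat, mul_zero, zero_mul, mul_one, one_mul, add_zero, zero_add, neg_zero]
  ring

lemma t2jj_c : collapse t2jjW2 = C (16:ℚ) * tEx := by
  simp only [collapse, t2jjW2, iEx, jEx, tEx, map_add, map_sub, map_neg, map_mul, map_pow, map_ofNat, bind₁_X_right, Fin.reduceEq, reduceIte]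
  ring

lemma t2jj : transvectant 2 jEx jEx = C (16:ℚ) * tEx := by
  rw [transvectant, t2jj_0]
  simp only [Function.iterate_succ_apply', Function.iterate_zero_apply]
  rw [t2jj_1, t2jj_2, t2jj_c]

noncomputable def t2tiW0 : MvPolynomial (Fin 10) ℚ :=
  1626789512 * X 6 ^ 2 * X 8 ^ 2 - 2980468376 * X 6 ^ 2 * X 8 * X 9 + 3761208598 * X 6 ^ 2 * X 9 ^ 2 - 1559200836 * X 6 * X 7 * X 8 ^ 2 + 2856638028 * X 6 * X 7 * X 8 * X 9 - 3604940619 * X 6 * X 7 * X 9 ^ 2 - 741144792 * X 7 ^ 2 * X 8 ^ 2 + 1357863816 * X 7 ^ 2 * X 8 * X 9 - 1713559218 * X 7 ^ 2 * X 9 ^ 2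

noncomputable def t2tiW1 : MvPolynomial (Fin 10) ℚ :=
  -2842535080 * X 6 * X 8 + 12188196364 * X 6 * X 9 + 5821217196 * X 7 * X 8 - 9925608870 * X 7 * X 9

noncomputable def t2tiW2 : MvPolynomial (Fin 10) ℚ :=
  6366979168

lemma t2ti_0 : tEx * toSecond iEx = t2tiW0 := by
  simp only [toSecond, tEx, iEx, t2tiW0, map_add, map_sub, map_neg, map_mul, map_pow, map_ofNat, bind₁_X_right, Fin.reduceEq, reduceIte]
  ring

lemma t2ti_1 : Omega t2tiW0 = t2tiW1 := by
  rw [t2tiW0, t2tiW1]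
  simp only [Omega, map_add, map_sub, map_neg, map_zero, map_one, pderiv_mul, pderiv_pow, pderiv_X, pderiv_ofNatQ, pderiv_natCastQ, pderiv_one, pderiv_C, Pi.single_apply, Fin.reduceEq, reduceIte, map_ofNat, Nat.cast_ofNat, mul_zero, zero_mul, mul_one, one_mul, add_zero, zero_add, neg_zero]
  ring

lemma t2ti_2 : Omega t2tiW1 = t2tiW2 := by
  rw [t2tiW1, t2tiW2]
  simp only [Omega, map_add, map_sub, map_neg, map_zero, map_one, pderiv_mul, pderiv_pow, pderiv_X, pderiv_ofNatQ, pderiv_natCastQ, pderiv_one, pderiv_C, Pi.single_apply, Fin.reduceEq, reduceIte, map_ofNat, Nat.cast_ofNat, mul_zero, zero_mul, mul_one, one_mul, add_zero, zero_add, neg_zero]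
  ring

lemma t2ti_c : collapse t2tiW2 = C (6366979168:ℚ) := by
  simp only [collapse, t2tiW2, iEx, jEx, tEx, map_add, map_sub, map_neg, map_mul, map_pow, map_ofNat, bind₁_X_right, Fin.reduceEq, reduceIte]

lemma t2ti : transvectant 2 tEx iEx = C (6366979168:ℚ) := by
  rw [transvectant, t2ti_0]
  simp only [Function.iterate_succ_apply', Function.iterate_zero_apply]
  rw [t2ti_1, t2ti_2, t2ti_c]

lemma Cinv_smul (c : ℚ) (hc : c ≠ 0) (p : MvPolynomial (Fin 10) ℚ) :
    C c⁻¹ * (C c * p) = p := by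
  rw [← mul_assoc, ← C_mul, inv_mul_cancel₀ hc, C_1, one_mul]

lemma bq : bind₁ sigEx (genQuintic : MvPolynomial (Fin 10) ℚ) = qEx := by
  simp only [genQuintic, qEx, map_add, map_sub, map_mul, map_pow, bind₁_X_right, sigEx,
    Fin.reduceEq, reduceIte, map_one, map_neg, map_ofNat]
  ring

lemma bI : bind₁ sigEx (covI : MvPolynomial (Fin 10) ℚ) = iEx := by
  rw [covI, map_mul, bind₁_C_right, transvectant_sigEx, bq, t4qq,
    Cinv_smul 288 (by norm_num)]

lemma bJ : bind₁ sigEx (covJ : MvPolynomial (Fin 10) ℚ) = jEx := by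
  rw [covJ, map_neg, map_mul, bind₁_C_right, transvectant_sigEx, bq, bI, t2qi]
  have h : (C (-12:ℚ) : MvPolynomial (Fin 10) ℚ) * jEx = -(C (12:ℚ) * jEx) := by
    rw [map_neg, neg_mul]
  rw [h, mul_neg, neg_neg, Cinv_smul 12 (by norm_num)]

lemma bA : bind₁ sigEx (invA : MvPolynomial (Fin 10) ℚ) = C (110578:ℚ) := by
  rw [invA, map_mul, bind₁_C_right, transvectant_sigEx, bI, t2ii, ← C_mul,
    show (32:ℚ)⁻¹ * 3538496 = 110578 by norm_num]

lemma bT : bind₁ sigEx (covTau : MvPolynomial (Fin 10) ℚ) = tEx := by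
  rw [covTau, map_mul, bind₁_C_right, transvectant_sigEx, bJ, t2jj,
    Cinv_smul 16 (by norm_num)]

lemma bB : bind₁ sigEx (invB : MvPolynomial (Fin 10) ℚ) = C (795872396:ℚ) := by
  rw [invB, map_mul, bind₁_C_right, transvectant_sigEx, bT, bI, t2ti, ← C_mul,
    show (8:ℚ)⁻¹ * 6366979168 = 795872396 by norm_num]

lemma bD : bind₁ sigEx (invDelta : MvPolynomial (Fin 10) ℚ) = C (72352036:ℚ) := by
  rw [invDelta, map_mul, bind₁_C_right, map_sub, map_pow, map_mul, bA, bB,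
    show ((4:MvPolynomial (Fin 10) ℚ)) = C (4:ℚ) from (map_ofNat _ _).symm, bind₁_C_right,
    ← C_pow, ← C_mul, ← C_sub, ← C_mul,
    show (125:ℚ)⁻¹ * ((110578:ℚ)^2 - 4 * 795872396) = 72352036 by norm_num]

lemma eval_bind₁Q (v : Fin 10 → ℚ) (p : MvPolynomial (Fin 10) ℚ) :
    eval v (bind₁ sigEx p) = eval (fun i => eval v (sigEx i)) p := by
  induction p using MvPolynomial.induction_on with
  | C a => simp
  | add p q hp hq => simp [map_add, hp, hq]
  | mul_X p i hp => simp [map_mul, hp]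

end Comp

/-- for the quintic x⁵ − 2x⁴ − 10x³ + 23x² − 6x − 4 over ℚ, the
invariants of the associated binary quintic satisfy δ = 25Δ/A² = (5/13)². -/
theorem delta_of_example_quintic :
    ∀ v : Fin 10 → ℚ, v 0 = 1 → v 1 = -2 → v 2 = -10 → v 3 = 23 → v 4 = -6 → v 5 = -4 →
      eval v (invA (K := ℚ)) ≠ 0 ∧
      25 * eval v (invDelta (K := ℚ)) / (eval v (invA (K := ℚ))) ^ 2 = (5 / 13) ^ 2 := by
  intro v h0 h1 h2 h3 h4 h5
  have hv : (fun i => eval v (sigEx i)) = v := by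
    funext i
    fin_cases i <;> simp [sigEx, h0, h1, h2, h3, h4, h5]
  have hA : eval v (invA (K := ℚ)) = 110578 := by
    rw [← hv, ← eval_bind₁Q, bA, eval_C]
  have hD : eval v (invDelta (K := ℚ)) = 72352036 := by
    rw [← hv, ← eval_bind₁Q, bD, eval_C]
  rw [hA, hD]
  norm_num
end

section
/- For the quintic x⁵ + 25x⁴ − x − 1, the degree-4 invariant A of the associated binary quintic vanishes. -/
/- Cayley Ω-process, transvectants, and the invariants of the binary quintic,
over a field K. Variables in `Fin 10`: 0..5 are the coefficients a₀,…,a₅;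
6 = x (and x₁), 7 = y (and y₁); 8 = x₂; 9 = y₂. -/

open MvPolynomial

variable {K : Type*} [Field K]

set_option maxHeartbeats 4000000
set_option maxRecDepth 8000

noncomputable def x0 : MvPolynomial (Fin 10) ℚ := X 0
noncomputable def x1 : MvPolynomial (Fin 10) ℚ := X 1
noncomputable def x2 : MvPolynomial (Fin 10) ℚ := X 2
noncomputable def x3 : MvPolynomial (Fin 10) ℚ := X 3
noncomputable def x4 : MvPolynomial (Fin 10) ℚ := X 4
noncomputable def x5 : MvPolynomial (Fin 10) ℚ := X 5
noncomputable def x6 : MvPolynomial (Fin 10) ℚ := X 6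
noncomputable def x7 : MvPolynomial (Fin 10) ℚ := X 7
noncomputable def x8 : MvPolynomial (Fin 10) ℚ := X 8
noncomputable def x9 : MvPolynomial (Fin 10) ℚ := X 9

noncomputable def W0 : MvPolynomial (Fin 10) ℚ :=
  x5 ^ (2 : ℕ) * x7 ^ (5 : ℕ) * x9 ^ (5 : ℕ) + x4 * x5 * x7 ^ (5 : ℕ) * x8 * x9 ^ (4 : ℕ) + x4 * x5 * x6 * x7 ^ (4 : ℕ) * x9 ^ (5 : ℕ) + x4 ^ (2 : ℕ) * x6 * x7 ^ (4 : ℕ) * x8 * x9 ^ (4 : ℕ) + x3 * x5 * x7 ^ (5 : ℕ) * x8 ^ (2 : ℕ) * x9 ^ (3 : ℕ) + x3 * x5 * x6 ^ (2 : ℕ) * x7 ^ (3 : ℕ) * x9 ^ (5 : ℕ) + x3 * x4 * x6 * x7 ^ (4 : ℕ) * x8 ^ (2 : ℕ) * x9 ^ (3 : ℕ) + x3 * x4 * x6 ^ (2 : ℕ) * x7 ^ (3 : ℕ) * x8 * x9 ^ (4 : ℕ) + x3 ^ (2 : ℕ) * x6 ^ (2 : ℕ) * x7 ^ (3 : ℕ)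 * x8 ^ (2 : ℕ) * x9 ^ (3 : ℕ) + x2 * x5 * x7 ^ (5 : ℕ) * x8 ^ (3 : ℕ) * x9 ^ (2 : ℕ) + x2 * x5 * x6 ^ (3 : ℕ) * x7 ^ (2 : ℕ) * x9 ^ (5 : ℕ) + x2 * x4 * x6 * x7 ^ (4 : ℕ) * x8 ^ (3 : ℕ) * x9 ^ (2 : ℕ) + x2 * x4 * x6 ^ (3 : ℕ) * x7 ^ (2 : ℕ) * x8 * x9 ^ (4 : ℕ) + x2 * x3 * x6 ^ (2 : ℕ) * x7 ^ (3 : ℕ) * x8 ^ (3 : ℕ) * x9 ^ (2 : ℕ) + x2 * x3 * x6 ^ (3 : ℕ) * x7 ^ (2 : ℕ) * x8 ^ (2 : ℕ) * x9 ^ (3 : ℕ) + x2 ^ (2 : ℕ) * x6 ^ (3 : ℕ) * x7 ^ (2 : ℕ) * x8 ^ (3 : ℕ) * x9 ^ (2 : ℕ) + x1 * x5 * x7 ^ (5 : ℕ) * x8 ^ (4 : ℕ) * x9 + x1 * x5 * x6 ^ (4 : ℕ) * x7 * x9 ^ (5 : ℕ) + x1 * x4 * x6 * x7 ^ (4 :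 ℕ) * x8 ^ (4 : ℕ) * x9 + x1 * x4 * x6 ^ (4 : ℕ) * x7 * x8 * x9 ^ (4 : ℕ) + x1 * x3 * x6 ^ (2 : ℕ) * x7 ^ (3 : ℕ) * x8 ^ (4 : ℕ) * x9 + x1 * x3 * x6 ^ (4 : ℕ) * x7 * x8 ^ (2 : ℕ) * x9 ^ (3 : ℕ) + x1 * x2 * x6 ^ (3 : ℕ) * x7 ^ (2 : ℕ) * x8 ^ (4 : ℕ) * x9 + x1 * x2 * x6 ^ (4 : ℕ) * x7 * x8 ^ (3 : ℕ) * x9 ^ (2 : ℕ) + x1 ^ (2 : ℕ) * x6 ^ (4 : ℕ) * x7 * x8 ^ (4 : ℕ) * x9 + x0 * x5 * x7 ^ (5 : ℕ) * x8 ^ (5 : ℕ) + x0 * x5 * x6 ^ (5 : ℕ) * x9 ^ (5 : ℕ) + x0 * x4 * x6 * x7 ^ (4 : ℕ) * x8 ^ (5 : ℕ) + x0 * x4 * x6 ^ (5 : ℕ) * x8 * x9 ^ (4 : ℕ) + x0 * x3 * x6 ^ (2 : ℕ) * x7 ^ (3 : ℕ) * x8 ^ (5 : ℕ) + x0 * x3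 * x6 ^ (5 : ℕ) * x8 ^ (2 : ℕ) * x9 ^ (3 : ℕ) + x0 * x2 * x6 ^ (3 : ℕ) * x7 ^ (2 : ℕ) * x8 ^ (5 : ℕ) + x0 * x2 * x6 ^ (5 : ℕ) * x8 ^ (3 : ℕ) * x9 ^ (2 : ℕ) + x0 * x1 * x6 ^ (4 : ℕ) * x7 * x8 ^ (5 : ℕ) + x0 * x1 * x6 ^ (5 : ℕ) * x8 ^ (4 : ℕ) * x9 + x0 ^ (2 : ℕ) * x6 ^ (5 : ℕ) * x8 ^ (5 : ℕ)

noncomputable def W1 : MvPolynomial (Fin 10) ℚ :=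
  (4 : MvPolynomial (Fin 10) ℚ) * x4 ^ (2 : ℕ) * x7 ^ (4 : ℕ) * x8 * x9 ^ (3 : ℕ) + (-4 : MvPolynomial (Fin 10) ℚ) * x4 ^ (2 : ℕ) * x6 * x7 ^ (3 : ℕ) * x9 ^ (4 : ℕ) + (-10 : MvPolynomial (Fin 10) ℚ) * x3 * x5 * x7 ^ (4 : ℕ) * x8 * x9 ^ (3 : ℕ) + (10 : MvPolynomial (Fin 10) ℚ) * x3 * x5 * x6 * x7 ^ (3 : ℕ) * x9 ^ (4 : ℕ) + (3 : MvPolynomial (Fin 10) ℚ) * x3 * x4 * x7 ^ (4 : ℕ) * x8 ^ (2 : ℕ) * x9 ^ (2 : ℕ) + (-3 : MvPolynomial (Fin 10) ℚ) * x3 * x4 * x6 ^ (2 : ℕ) * x7 ^ (2 : ℕ) * x9 ^ (4 : ℕ) + (6 : MvPolynomial (Fin 10) ℚ) * x3 ^ (2 : ℕ) * x6 * x7 ^ (3 : ℕ) * x8 ^ (2 : ℕ) * x9 ^ (2 : ℕ) + (-6 : MvPolynomial (Fin 10) ℚ) * x3 ^ (2 : ℕ) * x6 ^ (2 : ℕ)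 * x7 ^ (2 : ℕ) * x8 * x9 ^ (3 : ℕ) + (-15 : MvPolynomial (Fin 10) ℚ) * x2 * x5 * x7 ^ (4 : ℕ) * x8 ^ (2 : ℕ) * x9 ^ (2 : ℕ) + (15 : MvPolynomial (Fin 10) ℚ) * x2 * x5 * x6 ^ (2 : ℕ) * x7 ^ (2 : ℕ) * x9 ^ (4 : ℕ) + (2 : MvPolynomial (Fin 10) ℚ) * x2 * x4 * x7 ^ (4 : ℕ) * x8 ^ (3 : ℕ) * x9 + (-12 : MvPolynomial (Fin 10) ℚ) * x2 * x4 * x6 * x7 ^ (3 : ℕ) * x8 ^ (2 : ℕ) * x9 ^ (2 : ℕ) + (12 : MvPolynomial (Fin 10) ℚ) * x2 * x4 * x6 ^ (2 : ℕ) * x7 ^ (2 : ℕ) * x8 * x9 ^ (3 : ℕ) + (-2 : MvPolynomial (Fin 10) ℚ) * x2 * x4 * x6 ^ (3 : ℕ) * x7 * x9 ^ (4 : ℕ) + (4 : MvPolynomial (Fin 10) ℚ) * x2 * x3 * x6 * x7 ^ (3 : ℕ) * x8 ^ (3 : ℕ) * x9 + (-4 : MvPolynomial (Fin 10) ℚ)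 * x2 * x3 * x6 ^ (3 : ℕ) * x7 * x8 * x9 ^ (3 : ℕ) + (6 : MvPolynomial (Fin 10) ℚ) * x2 ^ (2 : ℕ) * x6 ^ (2 : ℕ) * x7 ^ (2 : ℕ) * x8 ^ (3 : ℕ) * x9 + (-6 : MvPolynomial (Fin 10) ℚ) * x2 ^ (2 : ℕ) * x6 ^ (3 : ℕ) * x7 * x8 ^ (2 : ℕ) * x9 ^ (2 : ℕ) + (-20 : MvPolynomial (Fin 10) ℚ) * x1 * x5 * x7 ^ (4 : ℕ) * x8 ^ (3 : ℕ) * x9 + (20 : MvPolynomial (Fin 10) ℚ) * x1 * x5 * x6 ^ (3 : ℕ) * x7 * x9 ^ (4 : ℕ) + x1 * x4 * x7 ^ (4 : ℕ) * x8 ^ (4 : ℕ) + (-16 : MvPolynomial (Fin 10) ℚ) * x1 * x4 * x6 * x7 ^ (3 : ℕ) * x8 ^ (3 : ℕ) * x9 + (16 : MvPolynomial (Fin 10) ℚ) * x1 * x4 * x6 ^ (3 : ℕ) * x7 * x8 * x9 ^ (3 : ℕ) + (-1 : MvPolynomial (Fin 10) ℚ) * x1 * x4 * x6 ^ (4 :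 ℕ) * x9 ^ (4 : ℕ) + (2 : MvPolynomial (Fin 10) ℚ) * x1 * x3 * x6 * x7 ^ (3 : ℕ) * x8 ^ (4 : ℕ) + (-12 : MvPolynomial (Fin 10) ℚ) * x1 * x3 * x6 ^ (2 : ℕ) * x7 ^ (2 : ℕ) * x8 ^ (3 : ℕ) * x9 + (12 : MvPolynomial (Fin 10) ℚ) * x1 * x3 * x6 ^ (3 : ℕ) * x7 * x8 ^ (2 : ℕ) * x9 ^ (2 : ℕ) + (-2 : MvPolynomial (Fin 10) ℚ) * x1 * x3 * x6 ^ (4 : ℕ) * x8 * x9 ^ (3 : ℕ) + (3 : MvPolynomial (Fin 10) ℚ) * x1 * x2 * x6 ^ (2 : ℕ) * x7 ^ (2 : ℕ) * x8 ^ (4 : ℕ) + (-3 : MvPolynomial (Fin 10) ℚ) * x1 * x2 * x6 ^ (4 : ℕ) * x8 ^ (2 : ℕ) * x9 ^ (2 : ℕ) + (4 : MvPolynomial (Fin 10) ℚ) * x1 ^ (2 : ℕ) * x6 ^ (3 : ℕ) * x7 * x8 ^ (4 : ℕ) + (-4 : MvPolynomial (Fin 10) ℚ) * x1 ^ (2 :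 ℕ) * x6 ^ (4 : ℕ) * x8 ^ (3 : ℕ) * x9 + (-25 : MvPolynomial (Fin 10) ℚ) * x0 * x5 * x7 ^ (4 : ℕ) * x8 ^ (4 : ℕ) + (25 : MvPolynomial (Fin 10) ℚ) * x0 * x5 * x6 ^ (4 : ℕ) * x9 ^ (4 : ℕ) + (-20 : MvPolynomial (Fin 10) ℚ) * x0 * x4 * x6 * x7 ^ (3 : ℕ) * x8 ^ (4 : ℕ) + (20 : MvPolynomial (Fin 10) ℚ) * x0 * x4 * x6 ^ (4 : ℕ) * x8 * x9 ^ (3 : ℕ) + (-15 : MvPolynomial (Fin 10) ℚ) * x0 * x3 * x6 ^ (2 : ℕ) * x7 ^ (2 : ℕ) * x8 ^ (4 : ℕ) + (15 : MvPolynomial (Fin 10) ℚ) * x0 * x3 * x6 ^ (4 : ℕ) * x8 ^ (2 : ℕ) * x9 ^ (2 : ℕ) + (-10 : MvPolynomial (Fin 10) ℚ) * x0 * x2 * x6 ^ (3 : ℕ) * x7 * x8 ^ (4 : ℕ) + (10 : MvPolynomial (Fin 10) ℚ) * x0 * x2 * x6 ^ (4 : ℕ) * x8 ^ (3 : ℕ)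 * x9

noncomputable def W2 : MvPolynomial (Fin 10) ℚ :=
  (-32 : MvPolynomial (Fin 10) ℚ) * x4 ^ (2 : ℕ) * x7 ^ (3 : ℕ) * x9 ^ (3 : ℕ) + (80 : MvPolynomial (Fin 10) ℚ) * x3 * x5 * x7 ^ (3 : ℕ) * x9 ^ (3 : ℕ) + (-24 : MvPolynomial (Fin 10) ℚ) * x3 * x4 * x7 ^ (3 : ℕ) * x8 * x9 ^ (2 : ℕ) + (-24 : MvPolynomial (Fin 10) ℚ) * x3 * x4 * x6 * x7 ^ (2 : ℕ) * x9 ^ (3 : ℕ) + (12 : MvPolynomial (Fin 10) ℚ) * x3 ^ (2 : ℕ) * x7 ^ (3 : ℕ) * x8 ^ (2 : ℕ) * x9 + (-72 : MvPolynomial (Fin 10) ℚ) * x3 ^ (2 : ℕ) * x6 * x7 ^ (2 : ℕ) * x8 * x9 ^ (2 : ℕ) + (12 : MvPolynomial (Fin 10) ℚ) * x3 ^ (2 : ℕ) * x6 ^ (2 : ℕ) * x7 * x9 ^ (3 : ℕ) + (120 : MvPolynomial (Fin 10) ℚ) * x2 * x5 * x7 ^ (3 : ℕ) * x8 * x9 ^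 (2 : ℕ) + (120 : MvPolynomial (Fin 10) ℚ) * x2 * x5 * x6 * x7 ^ (2 : ℕ) * x9 ^ (3 : ℕ) + (-48 : MvPolynomial (Fin 10) ℚ) * x2 * x4 * x7 ^ (3 : ℕ) * x8 ^ (2 : ℕ) * x9 + (144 : MvPolynomial (Fin 10) ℚ) * x2 * x4 * x6 * x7 ^ (2 : ℕ) * x8 * x9 ^ (2 : ℕ) + (-48 : MvPolynomial (Fin 10) ℚ) * x2 * x4 * x6 ^ (2 : ℕ) * x7 * x9 ^ (3 : ℕ) + (4 : MvPolynomial (Fin 10) ℚ) * x2 * x3 * x7 ^ (3 : ℕ) * x8 ^ (3 : ℕ) + (-36 : MvPolynomial (Fin 10) ℚ) * x2 * x3 * x6 * x7 ^ (2 : ℕ) * x8 ^ (2 : ℕ) * x9 + (-36 : MvPolynomial (Fin 10) ℚ) * x2 * x3 * x6 ^ (2 : ℕ) * x7 * x8 * x9 ^ (2 : ℕ) + (4 : MvPolynomial (Fin 10) ℚ) * x2 * x3 * x6 ^ (3 : ℕ) * x9 ^ (3 : ℕ) + (12 : MvPolynomial (Fin 10) ℚ) * x2 ^ (2 : ℕ)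 * x6 * x7 ^ (2 : ℕ) * x8 ^ (3 : ℕ) + (-72 : MvPolynomial (Fin 10) ℚ) * x2 ^ (2 : ℕ) * x6 ^ (2 : ℕ) * x7 * x8 ^ (2 : ℕ) * x9 + (12 : MvPolynomial (Fin 10) ℚ) * x2 ^ (2 : ℕ) * x6 ^ (3 : ℕ) * x8 * x9 ^ (2 : ℕ) + (240 : MvPolynomial (Fin 10) ℚ) * x1 * x5 * x7 ^ (3 : ℕ) * x8 ^ (2 : ℕ) * x9 + (240 : MvPolynomial (Fin 10) ℚ) * x1 * x5 * x6 ^ (2 : ℕ) * x7 * x9 ^ (3 : ℕ) + (-32 : MvPolynomial (Fin 10) ℚ) * x1 * x4 * x7 ^ (3 : ℕ) * x8 ^ (3 : ℕ) + (144 : MvPolynomial (Fin 10) ℚ) * x1 * x4 * x6 * x7 ^ (2 : ℕ) * x8 ^ (2 : ℕ) * x9 + (144 : MvPolynomial (Fin 10) ℚ) * x1 * x4 * x6 ^ (2 : ℕ) * x7 * x8 * x9 ^ (2 : ℕ) + (-32 : MvPolynomial (Fin 10) ℚ) * x1 * x4 * x6 ^ (3 : ℕ) * x9 ^ (3 : ℕ)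 + (-48 : MvPolynomial (Fin 10) ℚ) * x1 * x3 * x6 * x7 ^ (2 : ℕ) * x8 ^ (3 : ℕ) + (144 : MvPolynomial (Fin 10) ℚ) * x1 * x3 * x6 ^ (2 : ℕ) * x7 * x8 ^ (2 : ℕ) * x9 + (-48 : MvPolynomial (Fin 10) ℚ) * x1 * x3 * x6 ^ (3 : ℕ) * x8 * x9 ^ (2 : ℕ) + (-24 : MvPolynomial (Fin 10) ℚ) * x1 * x2 * x6 ^ (2 : ℕ) * x7 * x8 ^ (3 : ℕ) + (-24 : MvPolynomial (Fin 10) ℚ) * x1 * x2 * x6 ^ (3 : ℕ) * x8 ^ (2 : ℕ) * x9 + (-32 : MvPolynomial (Fin 10) ℚ) * x1 ^ (2 : ℕ) * x6 ^ (3 : ℕ) * x8 ^ (3 : ℕ) + (400 : MvPolynomial (Fin 10) ℚ) * x0 * x5 * x7 ^ (3 : ℕ) * x8 ^ (3 : ℕ) + (400 : MvPolynomial (Fin 10) ℚ) * x0 * x5 * x6 ^ (3 : ℕ) * x9 ^ (3 : ℕ) + (240 : MvPolynomial (Fin 10) ℚ) * x0 * x4 * x6 * x7 ^ (2 : ℕ)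 * x8 ^ (3 : ℕ) + (240 : MvPolynomial (Fin 10) ℚ) * x0 * x4 * x6 ^ (3 : ℕ) * x8 * x9 ^ (2 : ℕ) + (120 : MvPolynomial (Fin 10) ℚ) * x0 * x3 * x6 ^ (2 : ℕ) * x7 * x8 ^ (3 : ℕ) + (120 : MvPolynomial (Fin 10) ℚ) * x0 * x3 * x6 ^ (3 : ℕ) * x8 ^ (2 : ℕ) * x9 + (80 : MvPolynomial (Fin 10) ℚ) * x0 * x2 * x6 ^ (3 : ℕ) * x8 ^ (3 : ℕ)

noncomputable def W3 : MvPolynomial (Fin 10) ℚ :=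
  (-216 : MvPolynomial (Fin 10) ℚ) * x3 ^ (2 : ℕ) * x7 ^ (2 : ℕ) * x8 * x9 + (216 : MvPolynomial (Fin 10) ℚ) * x3 ^ (2 : ℕ) * x6 * x7 * x9 ^ (2 : ℕ) + (576 : MvPolynomial (Fin 10) ℚ) * x2 * x4 * x7 ^ (2 : ℕ) * x8 * x9 + (-576 : MvPolynomial (Fin 10) ℚ) * x2 * x4 * x6 * x7 * x9 ^ (2 : ℕ) + (-72 : MvPolynomial (Fin 10) ℚ) * x2 * x3 * x7 ^ (2 : ℕ) * x8 ^ (2 : ℕ) + (72 : MvPolynomial (Fin 10) ℚ) * x2 * x3 * x6 ^ (2 : ℕ) * x9 ^ (2 : ℕ) + (-216 : MvPolynomial (Fin 10) ℚ) * x2 ^ (2 : ℕ) * x6 * x7 * x8 ^ (2 : ℕ) + (216 : MvPolynomial (Fin 10) ℚ) * x2 ^ (2 : ℕ) * x6 ^ (2 : ℕ) * x8 * x9 + (-1440 : MvPolynomial (Fin 10) ℚ) * x1 * x5 * x7 ^ (2 : ℕ) * x8 * x9 + (1440 : MvPolynomial (Fin 10) ℚ) * x1 * x5 * x6 * x7 *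 x9 ^ (2 : ℕ) + (432 : MvPolynomial (Fin 10) ℚ) * x1 * x4 * x7 ^ (2 : ℕ) * x8 ^ (2 : ℕ) + (-432 : MvPolynomial (Fin 10) ℚ) * x1 * x4 * x6 ^ (2 : ℕ) * x9 ^ (2 : ℕ) + (576 : MvPolynomial (Fin 10) ℚ) * x1 * x3 * x6 * x7 * x8 ^ (2 : ℕ) + (-576 : MvPolynomial (Fin 10) ℚ) * x1 * x3 * x6 ^ (2 : ℕ) * x8 * x9 + (-3600 : MvPolynomial (Fin 10) ℚ) * x0 * x5 * x7 ^ (2 : ℕ) * x8 ^ (2 : ℕ) + (3600 : MvPolynomial (Fin 10) ℚ) * x0 * x5 * x6 ^ (2 : ℕ) * x9 ^ (2 : ℕ) + (-1440 : MvPolynomial (Fin 10) ℚ) * x0 * x4 * x6 * x7 * x8 ^ (2 : ℕ) + (1440 : MvPolynomial (Fin 10) ℚ) * x0 * x4 * x6 ^ (2 : ℕ) * x8 * x9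

noncomputable def W4 : MvPolynomial (Fin 10) ℚ :=
  (864 : MvPolynomial (Fin 10) ℚ) * x3 ^ (2 : ℕ) * x7 * x9 + (-2304 : MvPolynomial (Fin 10) ℚ) * x2 * x4 * x7 * x9 + (288 : MvPolynomial (Fin 10) ℚ) * x2 * x3 * x7 * x8 + (288 : MvPolynomial (Fin 10) ℚ) * x2 * x3 * x6 * x9 + (864 : MvPolynomial (Fin 10) ℚ) * x2 ^ (2 : ℕ) * x6 * x8 + (5760 : MvPolynomial (Fin 10) ℚ) * x1 * x5 * x7 * x9 + (-1728 : MvPolynomial (Fin 10) ℚ) * x1 * x4 * x7 * x8 + (-1728 : MvPolynomial (Fin 10) ℚ) * x1 * x4 * x6 * x9 + (-2304 : MvPolynomial (Fin 10) ℚ) * x1 * x3 * x6 * x8 + (14400 : MvPolynomial (Fin 10) ℚ) * x0 * x5 * x7 * x8 + (14400 : MvPolynomial (Fin 10) ℚ) * x0 * x5 * x6 * x9 + (5760 : MvPolynomial (Fin 10) ℚ) * x0 * x4 * x6 * x8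

noncomputable def Ipoly : MvPolynomial (Fin 10) ℚ :=
  (864 : MvPolynomial (Fin 10) ℚ) * x3 ^ (2 : ℕ) * x7 ^ (2 : ℕ) + (-2304 : MvPolynomial (Fin 10) ℚ) * x2 * x4 * x7 ^ (2 : ℕ) + (576 : MvPolynomial (Fin 10) ℚ) * x2 * x3 * x6 * x7 + (864 : MvPolynomial (Fin 10) ℚ) * x2 ^ (2 : ℕ) * x6 ^ (2 : ℕ) + (5760 : MvPolynomial (Fin 10) ℚ) * x1 * x5 * x7 ^ (2 : ℕ) + (-3456 : MvPolynomial (Fin 10) ℚ) * x1 * x4 * x6 * x7 + (-2304 : MvPolynomial (Fin 10) ℚ) * x1 * x3 * x6 ^ (2 : ℕ) + (28800 : MvPolynomial (Fin 10) ℚ) * x0 * x5 * x6 * x7 + (5760 : MvPolynomial (Fin 10) ℚ) * x0 * x4 * x6 ^ (2 : ℕ)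

noncomputable def U0 : MvPolynomial (Fin 10) ℚ :=
  (746496 : MvPolynomial (Fin 10) ℚ) * x3 ^ (4 : ℕ) * x7 ^ (2 : ℕ) * x9 ^ (2 : ℕ) + (-3981312 : MvPolynomial (Fin 10) ℚ) * x2 * x3 ^ (2 : ℕ) * x4 * x7 ^ (2 : ℕ) * x9 ^ (2 : ℕ) + (497664 : MvPolynomial (Fin 10) ℚ) * x2 * x3 ^ (3 : ℕ) * x7 ^ (2 : ℕ) * x8 * x9 + (497664 : MvPolynomial (Fin 10) ℚ) * x2 * x3 ^ (3 : ℕ) * x6 * x7 * x9 ^ (2 : ℕ) + (5308416 : MvPolynomial (Fin 10) ℚ) * x2 ^ (2 : ℕ) * x4 ^ (2 : ℕ) * x7 ^ (2 : ℕ) * x9 ^ (2 : ℕ) + (-1327104 : MvPolynomial (Fin 10) ℚ) * x2 ^ (2 : ℕ) * x3 * x4 * x7 ^ (2 : ℕ) * x8 * x9 + (-1327104 : MvPolynomial (Fin 10) ℚ) * x2 ^ (2 : ℕ) * x3 * x4 * x6 * x7 * x9 ^ (2 : ℕ) + (746496 : MvPolynomial (Fin 10) ℚ) * x2 ^ (2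 : ℕ) * x3 ^ (2 : ℕ) * x7 ^ (2 : ℕ) * x8 ^ (2 : ℕ) + (331776 : MvPolynomial (Fin 10) ℚ) * x2 ^ (2 : ℕ) * x3 ^ (2 : ℕ) * x6 * x7 * x8 * x9 + (746496 : MvPolynomial (Fin 10) ℚ) * x2 ^ (2 : ℕ) * x3 ^ (2 : ℕ) * x6 ^ (2 : ℕ) * x9 ^ (2 : ℕ) + (-1990656 : MvPolynomial (Fin 10) ℚ) * x2 ^ (3 : ℕ) * x4 * x7 ^ (2 : ℕ) * x8 ^ (2 : ℕ) + (-1990656 : MvPolynomial (Fin 10) ℚ) * x2 ^ (3 : ℕ) * x4 * x6 ^ (2 : ℕ) * x9 ^ (2 : ℕ) + (497664 : MvPolynomial (Fin 10) ℚ) * x2 ^ (3 : ℕ) * x3 * x6 * x7 * x8 ^ (2 : ℕ) + (497664 : MvPolynomial (Fin 10) ℚ) * x2 ^ (3 : ℕ) * x3 * x6 ^ (2 : ℕ) * x8 * x9 + (746496 : MvPolynomial (Fin 10) ℚ) * x2 ^ (4 : ℕ) * x6 ^ (2 : ℕ) * x8 ^ (2 : ℕ) + (9953280 : MvPolynomial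 (Fin 10) ℚ) * x1 * x3 ^ (2 : ℕ) * x5 * x7 ^ (2 : ℕ) * x9 ^ (2 : ℕ) + (-2985984 : MvPolynomial (Fin 10) ℚ) * x1 * x3 ^ (2 : ℕ) * x4 * x7 ^ (2 : ℕ) * x8 * x9 + (-2985984 : MvPolynomial (Fin 10) ℚ) * x1 * x3 ^ (2 : ℕ) * x4 * x6 * x7 * x9 ^ (2 : ℕ) + (-1990656 : MvPolynomial (Fin 10) ℚ) * x1 * x3 ^ (3 : ℕ) * x7 ^ (2 : ℕ) * x8 ^ (2 : ℕ) + (-1990656 : MvPolynomial (Fin 10) ℚ) * x1 * x3 ^ (3 : ℕ) * x6 ^ (2 : ℕ) * x9 ^ (2 : ℕ) + (-26542080 : MvPolynomial (Fin 10) ℚ) * x1 * x2 * x4 * x5 * x7 ^ (2 : ℕ) * x9 ^ (2 : ℕ) + (7962624 : MvPolynomial (Fin 10) ℚ) * x1 * x2 * x4 ^ (2 : ℕ) * x7 ^ (2 : ℕ) * x8 * x9 + (7962624 : MvPolynomial (Fin 10) ℚ) * x1 * x2 * x4 ^ (2 : ℕ) * x6 * x7 * x9 ^ (2 : ℕ)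 + (3317760 : MvPolynomial (Fin 10) ℚ) * x1 * x2 * x3 * x5 * x7 ^ (2 : ℕ) * x8 * x9 + (3317760 : MvPolynomial (Fin 10) ℚ) * x1 * x2 * x3 * x5 * x6 * x7 * x9 ^ (2 : ℕ) + (5308416 : MvPolynomial (Fin 10) ℚ) * x1 * x2 * x3 * x4 * x7 ^ (2 : ℕ) * x8 ^ (2 : ℕ) + (-3981312 : MvPolynomial (Fin 10) ℚ) * x1 * x2 * x3 * x4 * x6 * x7 * x8 * x9 + (5308416 : MvPolynomial (Fin 10) ℚ) * x1 * x2 * x3 * x4 * x6 ^ (2 : ℕ) * x9 ^ (2 : ℕ) + (-1327104 : MvPolynomial (Fin 10) ℚ) * x1 * x2 * x3 ^ (2 : ℕ) * x6 * x7 * x8 ^ (2 : ℕ) + (-1327104 : MvPolynomial (Fin 10) ℚ) * x1 * x2 * x3 ^ (2 : ℕ) * x6 ^ (2 : ℕ) * x8 * x9 + (4976640 : MvPolynomial (Fin 10) ℚ) * x1 * x2 ^ (2 : ℕ) * x5 * x7 ^ (2 : ℕ) * x8 ^ (2 : ℕ) + (4976640 : MvPolynomial (Fin 10) ℚ) * x1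 * x2 ^ (2 : ℕ) * x5 * x6 ^ (2 : ℕ) * x9 ^ (2 : ℕ) + (-2985984 : MvPolynomial (Fin 10) ℚ) * x1 * x2 ^ (2 : ℕ) * x4 * x6 * x7 * x8 ^ (2 : ℕ) + (-2985984 : MvPolynomial (Fin 10) ℚ) * x1 * x2 ^ (2 : ℕ) * x4 * x6 ^ (2 : ℕ) * x8 * x9 + (-3981312 : MvPolynomial (Fin 10) ℚ) * x1 * x2 ^ (2 : ℕ) * x3 * x6 ^ (2 : ℕ) * x8 ^ (2 : ℕ) + (33177600 : MvPolynomial (Fin 10) ℚ) * x1 ^ (2 : ℕ) * x5 ^ (2 : ℕ) * x7 ^ (2 : ℕ) * x9 ^ (2 : ℕ) + (-19906560 : MvPolynomial (Fin 10) ℚ) * x1 ^ (2 : ℕ) * x4 * x5 * x7 ^ (2 : ℕ) * x8 * x9 + (-19906560 : MvPolynomial (Fin 10) ℚ) * x1 ^ (2 : ℕ) * x4 * x5 * x6 * x7 * x9 ^ (2 : ℕ) + (11943936 : MvPolynomial (Fin 10) ℚ) * x1 ^ (2 : ℕ) * x4 ^ (2 : ℕ) * x6 * x7 * x8 * x9 +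 (-13271040 : MvPolynomial (Fin 10) ℚ) * x1 ^ (2 : ℕ) * x3 * x5 * x7 ^ (2 : ℕ) * x8 ^ (2 : ℕ) + (-13271040 : MvPolynomial (Fin 10) ℚ) * x1 ^ (2 : ℕ) * x3 * x5 * x6 ^ (2 : ℕ) * x9 ^ (2 : ℕ) + (7962624 : MvPolynomial (Fin 10) ℚ) * x1 ^ (2 : ℕ) * x3 * x4 * x6 * x7 * x8 ^ (2 : ℕ) + (7962624 : MvPolynomial (Fin 10) ℚ) * x1 ^ (2 : ℕ) * x3 * x4 * x6 ^ (2 : ℕ) * x8 * x9 + (5308416 : MvPolynomial (Fin 10) ℚ) * x1 ^ (2 : ℕ) * x3 ^ (2 : ℕ) * x6 ^ (2 : ℕ) * x8 ^ (2 : ℕ) + (24883200 : MvPolynomial (Fin 10) ℚ) * x0 * x3 ^ (2 : ℕ) * x5 * x7 ^ (2 : ℕ) * x8 * x9 + (24883200 : MvPolynomial (Fin 10) ℚ) * x0 * x3 ^ (2 : ℕ) * x5 * x6 * x7 * x9 ^ (2 : ℕ) + (4976640 : MvPolynomial (Fin 10) ℚ) * x0 * x3 ^ (2 : ℕ) * x4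 * x7 ^ (2 : ℕ) * x8 ^ (2 : ℕ) + (4976640 : MvPolynomial (Fin 10) ℚ) * x0 * x3 ^ (2 : ℕ) * x4 * x6 ^ (2 : ℕ) * x9 ^ (2 : ℕ) + (-66355200 : MvPolynomial (Fin 10) ℚ) * x0 * x2 * x4 * x5 * x7 ^ (2 : ℕ) * x8 * x9 + (-66355200 : MvPolynomial (Fin 10) ℚ) * x0 * x2 * x4 * x5 * x6 * x7 * x9 ^ (2 : ℕ) + (-13271040 : MvPolynomial (Fin 10) ℚ) * x0 * x2 * x4 ^ (2 : ℕ) * x7 ^ (2 : ℕ) * x8 ^ (2 : ℕ) + (-13271040 : MvPolynomial (Fin 10) ℚ) * x0 * x2 * x4 ^ (2 : ℕ) * x6 ^ (2 : ℕ) * x9 ^ (2 : ℕ) + (33177600 : MvPolynomial (Fin 10) ℚ) * x0 * x2 * x3 * x5 * x6 * x7 * x8 * x9 + (3317760 : MvPolynomial (Fin 10) ℚ) * x0 * x2 * x3 * x4 * x6 * x7 * x8 ^ (2 : ℕ) + (3317760 : MvPolynomial (Fin 10) ℚ) * x0 * x2 * x3 * x4 * x6 ^ (2 : ℕ) * x8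 * x9 + (24883200 : MvPolynomial (Fin 10) ℚ) * x0 * x2 ^ (2 : ℕ) * x5 * x6 * x7 * x8 ^ (2 : ℕ) + (24883200 : MvPolynomial (Fin 10) ℚ) * x0 * x2 ^ (2 : ℕ) * x5 * x6 ^ (2 : ℕ) * x8 * x9 + (9953280 : MvPolynomial (Fin 10) ℚ) * x0 * x2 ^ (2 : ℕ) * x4 * x6 ^ (2 : ℕ) * x8 ^ (2 : ℕ) + (165888000 : MvPolynomial (Fin 10) ℚ) * x0 * x1 * x5 ^ (2 : ℕ) * x7 ^ (2 : ℕ) * x8 * x9 + (165888000 : MvPolynomial (Fin 10) ℚ) * x0 * x1 * x5 ^ (2 : ℕ) * x6 * x7 * x9 ^ (2 : ℕ) + (33177600 : MvPolynomial (Fin 10) ℚ) * x0 * x1 * x4 * x5 * x7 ^ (2 : ℕ) * x8 ^ (2 : ℕ) + (-199065600 : MvPolynomial (Fin 10) ℚ) * x0 * x1 * x4 * x5 * x6 * x7 * x8 * x9 + (33177600 : MvPolynomial (Fin 10) ℚ) * x0 * x1 * x4 * x5 * x6 ^ (2 : ℕ) * x9 ^ (2 : ℕ) + (-19906560 : MvPolynomial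 (Fin 10) ℚ) * x0 * x1 * x4 ^ (2 : ℕ) * x6 * x7 * x8 ^ (2 : ℕ) + (-19906560 : MvPolynomial (Fin 10) ℚ) * x0 * x1 * x4 ^ (2 : ℕ) * x6 ^ (2 : ℕ) * x8 * x9 + (-66355200 : MvPolynomial (Fin 10) ℚ) * x0 * x1 * x3 * x5 * x6 * x7 * x8 ^ (2 : ℕ) + (-66355200 : MvPolynomial (Fin 10) ℚ) * x0 * x1 * x3 * x5 * x6 ^ (2 : ℕ) * x8 * x9 + (-26542080 : MvPolynomial (Fin 10) ℚ) * x0 * x1 * x3 * x4 * x6 ^ (2 : ℕ) * x8 ^ (2 : ℕ) + (829440000 : MvPolynomial (Fin 10) ℚ) * x0 ^ (2 : ℕ) * x5 ^ (2 : ℕ) * x6 * x7 * x8 * x9 + (165888000 : MvPolynomial (Fin 10) ℚ) * x0 ^ (2 : ℕ) * x4 * x5 * x6 * x7 * x8 ^ (2 : ℕ) + (165888000 : MvPolynomial (Fin 10) ℚ) * x0 ^ (2 : ℕ) * x4 * x5 * x6 ^ (2 : ℕ) * x8 * x9 + (33177600 : MvPolynomial (Fin 10) ℚ) * x0 ^ (2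 : ℕ) * x4 ^ (2 : ℕ) * x6 ^ (2 : ℕ) * x8 ^ (2 : ℕ)

noncomputable def U1 : MvPolynomial (Fin 10) ℚ :=
  (-2654208 : MvPolynomial (Fin 10) ℚ) * x2 ^ (2 : ℕ) * x3 ^ (2 : ℕ) * x7 * x8 + (2654208 : MvPolynomial (Fin 10) ℚ) * x2 ^ (2 : ℕ) * x3 ^ (2 : ℕ) * x6 * x9 + (7962624 : MvPolynomial (Fin 10) ℚ) * x2 ^ (3 : ℕ) * x4 * x7 * x8 + (-7962624 : MvPolynomial (Fin 10) ℚ) * x2 ^ (3 : ℕ) * x4 * x6 * x9 + (7962624 : MvPolynomial (Fin 10) ℚ) * x1 * x3 ^ (3 : ℕ) * x7 * x8 + (-7962624 : MvPolynomial (Fin 10) ℚ) * x1 * x3 ^ (3 : ℕ) * x6 * x9 + (-25214976 : MvPolynomial (Fin 10) ℚ) * x1 * x2 * x3 * x4 * x7 * x8 + (25214976 : MvPolynomial (Fin 10) ℚ) * x1 * x2 * x3 * x4 * x6 * x9 + (-19906560 : MvPolynomial (Fin 10) ℚ) * x1 * x2 ^ (2 : ℕ) * x5 * x7 * x8 + (19906560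 : MvPolynomial (Fin 10) ℚ) * x1 * x2 ^ (2 : ℕ) * x5 * x6 * x9 + (11943936 : MvPolynomial (Fin 10) ℚ) * x1 ^ (2 : ℕ) * x4 ^ (2 : ℕ) * x7 * x8 + (-11943936 : MvPolynomial (Fin 10) ℚ) * x1 ^ (2 : ℕ) * x4 ^ (2 : ℕ) * x6 * x9 + (53084160 : MvPolynomial (Fin 10) ℚ) * x1 ^ (2 : ℕ) * x3 * x5 * x7 * x8 + (-53084160 : MvPolynomial (Fin 10) ℚ) * x1 ^ (2 : ℕ) * x3 * x5 * x6 * x9 + (-19906560 : MvPolynomial (Fin 10) ℚ) * x0 * x3 ^ (2 : ℕ) * x4 * x7 * x8 + (19906560 : MvPolynomial (Fin 10) ℚ) * x0 * x3 ^ (2 : ℕ) * x4 * x6 * x9 + (53084160 : MvPolynomial (Fin 10) ℚ) * x0 * x2 * x4 ^ (2 : ℕ) * x7 * x8 + (-53084160 : MvPolynomial (Fin 10) ℚ) * x0 * x2 * x4 ^ (2 : ℕ) * x6 * x9 + (33177600 : MvPolynomial (Fin 10) ℚ) * x0 * x2 * x3 * x5 * x7 * x8 + (-33177600 : MvPolynomial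 (Fin 10) ℚ) * x0 * x2 * x3 * x5 * x6 * x9 + (-331776000 : MvPolynomial (Fin 10) ℚ) * x0 * x1 * x4 * x5 * x7 * x8 + (331776000 : MvPolynomial (Fin 10) ℚ) * x0 * x1 * x4 * x5 * x6 * x9 + (829440000 : MvPolynomial (Fin 10) ℚ) * x0 ^ (2 : ℕ) * x5 ^ (2 : ℕ) * x7 * x8 + (-829440000 : MvPolynomial (Fin 10) ℚ) * x0 ^ (2 : ℕ) * x5 ^ (2 : ℕ) * x6 * x9

noncomputable def U2 : MvPolynomial (Fin 10) ℚ :=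
  (5308416 : MvPolynomial (Fin 10) ℚ) * x2 ^ (2 : ℕ) * x3 ^ (2 : ℕ) + (-15925248 : MvPolynomial (Fin 10) ℚ) * x2 ^ (3 : ℕ) * x4 + (-15925248 : MvPolynomial (Fin 10) ℚ) * x1 * x3 ^ (3 : ℕ) + (50429952 : MvPolynomial (Fin 10) ℚ) * x1 * x2 * x3 * x4 + (39813120 : MvPolynomial (Fin 10) ℚ) * x1 * x2 ^ (2 : ℕ) * x5 + (-23887872 : MvPolynomial (Fin 10) ℚ) * x1 ^ (2 : ℕ) * x4 ^ (2 : ℕ) + (-106168320 : MvPolynomial (Fin 10) ℚ) * x1 ^ (2 : ℕ) * x3 * x5 + (39813120 : MvPolynomial (Fin 10) ℚ) * x0 * x3 ^ (2 : ℕ) * x4 + (-106168320 : MvPolynomial (Fin 10) ℚ) * x0 * x2 * x4 ^ (2 : ℕ) + (-66355200 : MvPolynomial (Fin 10) ℚ) * x0 * x2 * x3 * x5 + (663552000 : MvPolynomial (Fin 10) ℚ) * x0 * x1 * x4 * x5 + (-1658880000 : MvPolynomial (Fin 10) ℚ) * x0 ^ (2 : ℕ) * x5 ^ (2 : ℕ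)

noncomputable def Afin : MvPolynomial (Fin 10) ℚ :=
  (5308416 : MvPolynomial (Fin 10) ℚ) * x2 ^ (2 : ℕ) * x3 ^ (2 : ℕ) + (-15925248 : MvPolynomial (Fin 10) ℚ) * x2 ^ (3 : ℕ) * x4 + (-15925248 : MvPolynomial (Fin 10) ℚ) * x1 * x3 ^ (3 : ℕ) + (50429952 : MvPolynomial (Fin 10) ℚ) * x1 * x2 * x3 * x4 + (39813120 : MvPolynomial (Fin 10) ℚ) * x1 * x2 ^ (2 : ℕ) * x5 + (-23887872 : MvPolynomial (Fin 10) ℚ) * x1 ^ (2 : ℕ) * x4 ^ (2 : ℕ) + (-106168320 : MvPolynomial (Fin 10) ℚ) * x1 ^ (2 : ℕ) * x3 * x5 + (39813120 : MvPolynomial (Fin 10) ℚ) * x0 * x3 ^ (2 : ℕ) * x4 + (-106168320 : MvPolynomial (Fin 10) ℚ) * x0 * x2 * x4 ^ (2 : ℕ) + (-66355200 : MvPolynomial (Fin 10) ℚ) * x0 * x2 * x3 * x5 + (663552000 : MvPolynomial (Fin 10) ℚ) * x0 * x1 * x4 * x5 + (-1658880000 : MvPolynomial (Fin 10) ℚ)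 * x0 ^ (2 : ℕ) * x5 ^ (2 : ℕ)

lemma pderiv_ofNat' (i : Fin 10) (n : ℕ) [n.AtLeastTwo] :
    pderiv i (no_index (OfNat.ofNat n) : MvPolynomial (Fin 10) ℚ) = 0 := by
  simpa using Derivation.map_natCast (pderiv (R := ℚ) i) (OfNat.ofNat n : ℕ)

lemma toSecond_C_mul (c : ℚ) (p : MvPolynomial (Fin 10) ℚ) :
    toSecond (C c * p) = C c * toSecond p := by
  unfold toSecond; simp

lemma Omega_C_mul (c : ℚ) (p : MvPolynomial (Fin 10) ℚ) :
    Omega (C c * p) = C c * Omega p := by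
  unfold Omega; simp [pderiv_C_mul]; ring

lemma collapse_C_mul (c : ℚ) (p : MvPolynomial (Fin 10) ℚ) :
    collapse (C c * p) = C c * collapse p := by
  unfold collapse; simp

lemma hW0 : (genQuintic * toSecond genQuintic : MvPolynomial (Fin 10) ℚ) = W0 := by
  simp [map_ofNat, genQuintic, toSecond, W0, x0, x1, x2, x3, x4, x5, x6, x7, x8, x9]
  try ring

lemma hW1 : Omega (W0 : MvPolynomial (Fin 10) ℚ) = W1 := by
  simp [Omega, W0, W1, x0, x1, x2, x3, x4, x5, x6, x7, x8, x9, pderiv_mul, pderiv_pow, pderiv_ofNat']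
  try ring

lemma hW2 : Omega (W1 : MvPolynomial (Fin 10) ℚ) = W2 := by
  simp [Omega, W1, W2, x0, x1, x2, x3, x4, x5, x6, x7, x8, x9, pderiv_mul, pderiv_pow, pderiv_ofNat']
  try ring

lemma hW3 : Omega (W2 : MvPolynomial (Fin 10) ℚ) = W3 := by
  simp [Omega, W2, W3, x0, x1, x2, x3, x4, x5, x6, x7, x8, x9, pderiv_mul, pderiv_pow, pderiv_ofNat']
  try ring

lemma hW4 : Omega (W3 : MvPolynomial (Fin 10) ℚ) = W4 := by
  simp [Omega, W3, W4, x0, x1, x2, x3, x4, x5, x6, x7, x8, x9, pderiv_mul, pderiv_pow, pderiv_ofNat']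
  try ring

lemma hIpoly : collapse (W4 : MvPolynomial (Fin 10) ℚ) = Ipoly := by
  simp [map_ofNat, collapse, W4, Ipoly, x0, x1, x2, x3, x4, x5, x6, x7, x8, x9]
  try ring

lemma hcovI : (covI : MvPolynomial (Fin 10) ℚ) = C (288 : ℚ)⁻¹ * Ipoly := by
  unfold covI transvectant
  have h4 : Omega^[4] (genQuintic * toSecond genQuintic : MvPolynomial (Fin 10) ℚ)
      = W4 := by
    show Omega (Omega (Omega (Omega (genQuintic * toSecond genQuintic)))) = W4
    rw [hW0, hW1, hW2, hW3, hW4]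
  rw [h4, hIpoly]

lemma hU0 : (Ipoly * toSecond Ipoly : MvPolynomial (Fin 10) ℚ) = U0 := by
  simp [map_ofNat, Ipoly, toSecond, U0, x0, x1, x2, x3, x4, x5, x6, x7, x8, x9]
  try ring

lemma hU1 : Omega (U0 : MvPolynomial (Fin 10) ℚ) = U1 := by
  simp [Omega, U0, U1, x0, x1, x2, x3, x4, x5, x6, x7, x8, x9, pderiv_mul, pderiv_pow, pderiv_ofNat']
  try ring

lemma hU2 : Omega (U1 : MvPolynomial (Fin 10) ℚ) = U2 := by
  simp [Omega, U1, U2, x0, x1, x2, x3, x4, x5, x6, x7, x8, x9, pderiv_mul, pderiv_pow, pderiv_ofNat']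
  try ring

lemma hAfin : collapse (U2 : MvPolynomial (Fin 10) ℚ) = Afin := by
  simp [map_ofNat, collapse, U2, Afin, x0, x1, x2, x3, x4, x5, x6, x7, x8, x9]
  try ring

lemma hinvA : (invA : MvPolynomial (Fin 10) ℚ)
    = C (32 : ℚ)⁻¹ * (C ((288 : ℚ)⁻¹ * (288 : ℚ)⁻¹) * Afin) := by
  unfold invA transvectant
  rw [hcovI, toSecond_C_mul, mul_mul_mul_comm, ← C_mul, hU0]
  have h2 : Omega^[2] (C ((288 : ℚ)⁻¹ * (288 : ℚ)⁻¹) * U0 : MvPolynomial (Fin 10) ℚ)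
      = C ((288 : ℚ)⁻¹ * (288 : ℚ)⁻¹) * U2 := by
    show Omega (Omega (C ((288 : ℚ)⁻¹ * (288 : ℚ)⁻¹) * U0)) = _
    rw [Omega_C_mul, hU1, Omega_C_mul, hU2]
  rw [h2, collapse_C_mul, hAfin]

/-- for the quintic x⁵ + 25x⁴ − x − 1, the degree-4 invariant A of
the associated binary quintic vanishes. -/
theorem invariant_A_vanishes_example :
    ∀ v : Fin 10 → ℚ, v 0 = 1 → v 1 = 25 → v 2 = 0 → v 3 = 0 → v 4 = -1 → v 5 = -1 →
      eval v (invA (K := ℚ)) = 0 := by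
  intro v h0 h1 h2 h3 h4 h5
  rw [hinvA]
  simp [Afin, x0, x1, x2, x3, x4, x5, x6, x7, x8, x9, h0, h1, h2, h3, h4, h5]
  try norm_num
end

section
/- The Brioschi quintic x⁵ − 10c x³ + 45c² x − c², viewed as a polynomial over ℚ(c), has absolute invariants δ = 25Δ/A² = 1/5 and q = A³/(8M) = (25/8192)·(1728c − 1)/(1764c − 1). -/
/- Cayley Ω-process, transvectants, and the invariants of the binary quintic,
over a field K. Variables in `Fin 10`: 0..5 are the coefficients a₀,…,a₅;
6 = x (and x₁), 7 = y (and y₁); 8 = x₂; 9 = y₂. -/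

open MvPolynomial

variable {K : Type*} [Field K]

/-! ### Auxiliary machinery for the Brioschi computation -/

noncomputable def Qc : RatFunc ℚ := RatFunc.X

noncomputable def T (a : RatFunc ℚ) (k e1 e2 e3 e4 : ℕ) : MvPolynomial (Fin 10) (RatFunc ℚ) :=
  C a * (C Qc)^k * X 6^e1 * X 7^e2 * X 8^e3 * X 9^e4

lemma pd6T (a : RatFunc ℚ) (k e1 e2 e3 e4 : ℕ) :
    pderiv 6 (T a k e1 e2 e3 e4) = T (a * e1) k (e1-1) e2 e3 e4 := by
  simp [T, pderiv_mul, pderiv_pow, pderiv_C]; ring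

lemma pd7T (a : RatFunc ℚ) (k e1 e2 e3 e4 : ℕ) :
    pderiv 7 (T a k e1 e2 e3 e4) = T (a * e2) k e1 (e2-1) e3 e4 := by
  simp [T, pderiv_mul, pderiv_pow, pderiv_C]; ring

lemma pd8T (a : RatFunc ℚ) (k e1 e2 e3 e4 : ℕ) :
    pderiv 8 (T a k e1 e2 e3 e4) = T (a * e3) k e1 e2 (e3-1) e4 := by
  simp [T, pderiv_mul, pderiv_pow, pderiv_C]; ring

lemma pd9T (a : RatFunc ℚ) (k e1 e2 e3 e4 : ℕ) :
    pderiv 9 (T a k e1 e2 e3 e4) = T (a * e4) k e1 e2 e3 (e4-1) := by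
  simp [T, pderiv_mul, pderiv_pow, pderiv_C]; ring

noncomputable def br : Fin 10 → MvPolynomial (Fin 10) (RatFunc ℚ) := fun i =>
  if i = 0 then 1 else if i = 1 then 0 else if i = 2 then C (-10*Qc)
  else if i = 3 then 0 else if i = 4 then C (45*Qc^2)
  else if i = 5 then C (-Qc^2) else X i

lemma hbr (j : Fin 10) (hj : 6 ≤ j) (i : Fin 10) :
    pderiv j (br i) = bind₁ br (pderiv j (X i) : MvPolynomial (Fin 10) (RatFunc ℚ)) := by
  fin_cases j <;> simp at hj <;> fin_cases i <;> simp [br, pderiv_C]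

lemma pderiv_bind₁_br (j : Fin 10) (hj : 6 ≤ j)
    (w : MvPolynomial (Fin 10) (RatFunc ℚ)) :
    pderiv j (bind₁ br w) = bind₁ br (pderiv j w) := by
  induction w using MvPolynomial.induction_on with
  | C a => simp
  | add p q hp hq => simp [hp, hq]
  | mul_X p i hp => simp [pderiv_mul, hp, hbr j hj i]

lemma S_Omega (w : MvPolynomial (Fin 10) (RatFunc ℚ)) :
    bind₁ br (Omega w) = Omega (bind₁ br w) := by
  rw [Omega, Omega, map_sub,
    ← pderiv_bind₁_br 6 (by decide), ← pderiv_bind₁_br 9 (by decide),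
    ← pderiv_bind₁_br 8 (by decide), ← pderiv_bind₁_br 7 (by decide)]

lemma S_toSecond (g : MvPolynomial (Fin 10) (RatFunc ℚ)) :
    bind₁ br (toSecond g) = toSecond (bind₁ br g) := by
  rw [toSecond, toSecond, bind₁_bind₁, bind₁_bind₁]
  exact DFunLike.congr_fun
    (congrArg bind₁ (funext fun i => by fin_cases i <;> simp [br])) g

lemma S_collapse (w : MvPolynomial (Fin 10) (RatFunc ℚ)) :
    bind₁ br (collapse w) = collapse (bind₁ br w) := by
  rw [collapse, collapse, bind₁_bind₁, bind₁_bind₁]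
  exact DFunLike.congr_fun
    (congrArg bind₁ (funext fun i => by fin_cases i <;> simp [br])) w

lemma S_iter (m : ℕ) (w : MvPolynomial (Fin 10) (RatFunc ℚ)) :
    bind₁ br (Omega^[m] w) = Omega^[m] (bind₁ br w) := by
  induction m with
  | zero => simp
  | succ n ih =>
      rw [Function.iterate_succ_apply', Function.iterate_succ_apply', S_Omega, ih]

lemma S_transv (m : ℕ) (f g : MvPolynomial (Fin 10) (RatFunc ℚ)) :
    bind₁ br (transvectant m f g) = transvectant m (bind₁ br f) (bind₁ br g) := by
  rw [transvectant, transvectant, S_collapse, S_iter, map_mul, S_toSecond]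
noncomputable def fB : MvPolynomial (Fin 10) (RatFunc ℚ) := (T (1) 0 5 0 0 0 + T (-10) 1 3 2 0 0 + T (-1) 2 0 5 0 0 + T (45) 2 1 4 0 0)

noncomputable def iB : MvPolynomial (Fin 10) (RatFunc ℚ) := (T (-100) 2 1 1 0 0 + T (1200) 2 2 0 0 0 + T (3600) 3 0 2 0 0)

noncomputable def jB : MvPolynomial (Fin 10) (RatFunc ℚ) := (T (1000) 3 2 1 0 0 + T (-8000) 3 3 0 0 0 + T (1000) 4 0 3 0 0 + T (-72000) 4 1 2 0 0)

noncomputable def tB : MvPolynomial (Fin 10) (RatFunc ℚ) := (T (-500000) 6 2 0 0 0 + T (1500000) 7 0 2 0 0 + T (864000000) 7 2 0 0 0 + T (-2592000000) 8 0 2 0 0)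

lemma T1 : transvectant 4 fB fB = (T (-28800) 2 1 1 0 0 + T (345600) 2 2 0 0 0 + T (1036800) 3 0 2 0 0) := by
  have h0 : (fB : MvPolynomial (Fin 10) (RatFunc ℚ)) * toSecond fB = (T (1) 0 5 0 5 0 + T (-10) 1 3 2 5 0 + T (-10) 1 5 0 3 2 + T (-1) 2 0 5 5 0 + T (45) 2 1 4 5 0 + T (100) 2 3 2 3 2 + T (-1) 2 5 0 0 5 + T (45) 2 5 0 1 4 + T (10) 3 0 5 3 2 + T (-450) 3 1 4 3 2 + T (10) 3 3 2 0 5 + T (-450) 3 3 2 1 4 + T (1) 4 0 5 0 5 + T (-45) 4 0 5 1 4 + T (-45) 4 1 4 0 5 + T (2025) 4 1 4 1 4) := by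
    simp only [fB, fB, toSecond, T, map_add, map_mul, map_pow, bind₁_X_right, bind₁_C_right, Fin.reduceEq, reduceIte]
    simp only [T, Nat.reduceSub, Nat.reduceAdd, map_mul, map_pow, map_neg, map_ofNat, map_natCast, map_one, map_zero, mul_zero, zero_mul, add_zero, zero_add, neg_zero, Nat.cast_ofNat, Nat.cast_one, Nat.cast_zero]; try ring
  rw [transvectant, h0]
  simp only [Function.iterate_succ, Function.iterate_zero, Function.comp_apply, id_eq]
  rw [show Omega (T (1) 0 5 0 5 0 + T (-10) 1 3 2 5 0 + T (-10) 1 5 0 3 2 + T (-1) 2 0 5 5 0 + T (45) 2 1 4 5 0 + T (100) 2 3 2 3 2 + T (-1) 2 5 0 0 5 + T (45) 2 5 0 1 4 + T (10) 3 0 5 3 2 + T (-450) 3 1 4 3 2 + T (10) 3 3 2 0 5 + T (-450) 3 3 2 1 4 + T (1) 4 0 5 0 5 + T (-45) 4 0 5 1 4 + T (-45) 4 1 4 0 5 + T (2025) 4 1 4 1 4) = (T (100) 1 3 1 4 0 + T (-100) 1 4 0 3 1 + T (25) 2 0 4 4 0 + T (-900) 2 1 3 4 0 + T (600) 2 2 2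 3 1 + T (-600) 2 3 1 2 2 + T (-25) 2 4 0 0 4 + T (900) 2 4 0 1 3 + T (-150) 3 0 4 2 2 + T (-900) 3 0 4 3 1 + T (5400) 3 1 3 2 2 + T (150) 3 2 2 0 4 + T (-5400) 3 2 2 1 3 + T (900) 3 3 1 0 4 + T (8100) 4 0 4 1 3 + T (-8100) 4 1 3 0 4) by
    simp only [Omega, map_add, pd6T, pd7T, pd8T, pd9T]
    simp only [T, Nat.reduceSub, Nat.reduceAdd, map_mul, map_pow, map_neg, map_ofNat, map_natCast, map_one, map_zero, mul_zero, zero_mul, add_zero, zero_add, neg_zero, Nat.cast_ofNat, Nat.cast_one, Nat.cast_zero]; try ring]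
  rw [show Omega (T (100) 1 3 1 4 0 + T (-100) 1 4 0 3 1 + T (25) 2 0 4 4 0 + T (-900) 2 1 3 4 0 + T (600) 2 2 2 3 1 + T (-600) 2 3 1 2 2 + T (-25) 2 4 0 0 4 + T (900) 2 4 0 1 3 + T (-150) 3 0 4 2 2 + T (-900) 3 0 4 3 1 + T (5400) 3 1 3 2 2 + T (150) 3 2 2 0 4 + T (-5400) 3 2 2 1 3 + T (900) 3 3 1 0 4 + T (8100) 4 0 4 1 3 + T (-8100) 4 1 3 0 4) = (T (-800) 1 3 0 3 0 + T (-400) 2 0 3 3 0 + T (12000) 2 1 2 3 0 + T (-7200) 2 2 1 2 1 + T (-400) 2 3 0 0 3 + T (12000) 2 3 0 1 2 + T (1200) 3 0 3 1 2 + T (21600) 3 0 3 2 1 + T (1200) 3 1 2 0 3 + T (-64800) 3 1 2 1 2 + T (21600) 3 2 1 0 3 + T (-64800) 4 0 3 0 3) by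
    simp only [Omega, map_add, pd6T, pd7T, pd8T, pd9T]
    simp only [T, Nat.reduceSub, Nat.reduceAdd, map_mul, map_pow, map_neg, map_ofNat, map_natCast, map_one, map_zero, mul_zero, zero_mul, add_zero, zero_add, neg_zero, Nat.cast_ofNat, Nat.cast_one, Nat.cast_zero]; try ring]
  rw [show Omega (T (-800) 1 3 0 3 0 + T (-400) 2 0 3 3 0 + T (12000) 2 1 2 3 0 + T (-7200) 2 2 1 2 1 + T (-400) 2 3 0 0 3 + T (12000) 2 3 0 1 2 + T (1200) 3 0 3 1 2 + T (21600) 3 0 3 2 1 + T (1200) 3 1 2 0 3 + T (-64800) 3 1 2 1 2 + T (21600) 3 2 1 0 3 + T (-64800) 4 0 3 0 3) = (T (3600) 2 0 2 2 0 + T (-86400) 2 1 1 2 0 + T (-3600) 2 2 0 0 2 + T (86400) 2 2 0 1 1 + T (-259200) 3 0 2 1 1 + T (259200) 3 1 1 0 2) by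
    simp only [Omega, map_add, pd6T, pd7T, pd8T, pd9T]
    simp only [T, Nat.reduceSub, Nat.reduceAdd, map_mul, map_pow, map_neg, map_ofNat, map_natCast, map_one, map_zero, mul_zero, zero_mul, add_zero, zero_add, neg_zero, Nat.cast_ofNat, Nat.cast_one, Nat.cast_zero]; try ring]
  rw [show Omega (T (3600) 2 0 2 2 0 + T (-86400) 2 1 1 2 0 + T (-3600) 2 2 0 0 2 + T (86400) 2 2 0 1 1 + T (-259200) 3 0 2 1 1 + T (259200) 3 1 1 0 2) = (T (-14400) 2 0 1 1 0 + T (-14400) 2 1 0 0 1 + T (345600) 2 1 0 1 0 + T (1036800) 3 0 1 0 1) by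
    simp only [Omega, map_add, pd6T, pd7T, pd8T, pd9T]
    simp only [T, Nat.reduceSub, Nat.reduceAdd, map_mul, map_pow, map_neg, map_ofNat, map_natCast, map_one, map_zero, mul_zero, zero_mul, add_zero, zero_add, neg_zero, Nat.cast_ofNat, Nat.cast_one, Nat.cast_zero]; try ring]
  show collapse _ = _
  simp only [collapse, T, map_add, map_mul, map_pow, bind₁_X_right, bind₁_C_right, Fin.reduceEq, reduceIte]
  simp only [T, Nat.reduceSub, Nat.reduceAdd, map_mul, map_pow, map_neg, map_ofNat, map_natCast, map_one, map_zero, mul_zero, zero_mul, add_zero, zero_add, neg_zero, Nat.cast_ofNat, Nat.cast_one, Nat.cast_zero]; try ring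

lemma T2 : transvectant 2 fB iB = (T (-12000) 3 2 1 0 0 + T (96000) 3 3 0 0 0 + T (-12000) 4 0 3 0 0 + T (864000) 4 1 2 0 0) := by
  have h0 : (fB : MvPolynomial (Fin 10) (RatFunc ℚ)) * toSecond iB = (T (-100) 2 5 0 1 1 + T (1200) 2 5 0 2 0 + T (1000) 3 3 2 1 1 + T (-12000) 3 3 2 2 0 + T (3600) 3 5 0 0 2 + T (100) 4 0 5 1 1 + T (-1200) 4 0 5 2 0 + T (-4500) 4 1 4 1 1 + T (54000) 4 1 4 2 0 + T (-36000) 4 3 2 0 2 + T (-3600) 5 0 5 0 2 + T (162000) 5 1 4 0 2) := by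
    simp only [fB, iB, toSecond, T, map_add, map_mul, map_pow, bind₁_X_right, bind₁_C_right, Fin.reduceEq, reduceIte]
    simp only [T, Nat.reduceSub, Nat.reduceAdd, map_mul, map_pow, map_neg, map_ofNat, map_natCast, map_one, map_zero, mul_zero, zero_mul, add_zero, zero_add, neg_zero, Nat.cast_ofNat, Nat.cast_one, Nat.cast_zero]; try ring
  rw [transvectant, h0]
  simp only [Function.iterate_succ, Function.iterate_zero, Function.comp_apply, id_eq]
  rw [show Omega (T (-100) 2 5 0 1 1 + T (1200) 2 5 0 2 0 + T (1000) 3 3 2 1 1 + T (-12000) 3 3 2 2 0 + T (3600) 3 5 0 0 2 + T (100) 4 0 5 1 1 + T (-1200) 4 0 5 2 0 + T (-4500) 4 1 4 1 1 + T (54000) 4 1 4 2 0 + T (-36000) 4 3 2 0 2 + T (-3600) 5 0 5 0 2 + T (162000) 5 1 4 0 2) = (T (-500) 2 4 0 1 0 + T (3000) 3 2 2 1 0 + T (-2000) 3 3 1 0 1 + T (48000) 3 3 1 1 0 + T (36000) 3 4 0 0 1 + T (-500) 4 0 4 0 1 + T (7500) 4 0 4 1 0 + T (18000) 4 1 3 0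 1 + T (-432000) 4 1 3 1 0 + T (-216000) 4 2 2 0 1 + T (324000) 5 0 4 0 1) by
    simp only [Omega, map_add, pd6T, pd7T, pd8T, pd9T]
    simp only [T, Nat.reduceSub, Nat.reduceAdd, map_mul, map_pow, map_neg, map_ofNat, map_natCast, map_one, map_zero, mul_zero, zero_mul, add_zero, zero_add, neg_zero, Nat.cast_ofNat, Nat.cast_one, Nat.cast_zero]; try ring]
  rw [show Omega (T (-500) 2 4 0 1 0 + T (3000) 3 2 2 1 0 + T (-2000) 3 3 1 0 1 + T (48000) 3 3 1 1 0 + T (36000) 3 4 0 0 1 + T (-500) 4 0 4 0 1 + T (7500) 4 0 4 1 0 + T (18000) 4 1 3 0 1 + T (-432000) 4 1 3 1 0 + T (-216000) 4 2 2 0 1 + T (324000) 5 0 4 0 1) = (T (-12000) 3 2 1 0 0 + T (96000) 3 3 0 0 0 + T (-12000) 4 0 3 0 0 + T (864000) 4 1 2 0 0) by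
    simp only [Omega, map_add, pd6T, pd7T, pd8T, pd9T]
    simp only [T, Nat.reduceSub, Nat.reduceAdd, map_mul, map_pow, map_neg, map_ofNat, map_natCast, map_one, map_zero, mul_zero, zero_mul, add_zero, zero_add, neg_zero, Nat.cast_ofNat, Nat.cast_one, Nat.cast_zero]; try ring]
  show collapse _ = _
  simp only [collapse, T, map_add, map_mul, map_pow, bind₁_X_right, bind₁_C_right, Fin.reduceEq, reduceIte]
  simp only [T, Nat.reduceSub, Nat.reduceAdd, map_mul, map_pow, map_neg, map_ofNat, map_natCast, map_one, map_zero, mul_zero, zero_mul, add_zero, zero_add, neg_zero, Nat.cast_ofNat, Nat.cast_one, Nat.cast_zero]; try ring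

lemma T3 : transvectant 2 iB iB = (T (-20000) 4 0 0 0 0 + T (34560000) 5 0 0 0 0) := by
  have h0 : (iB : MvPolynomial (Fin 10) (RatFunc ℚ)) * toSecond iB = (T (10000) 4 1 1 1 1 + T (-120000) 4 1 1 2 0 + T (-120000) 4 2 0 1 1 + T (1440000) 4 2 0 2 0 + T (-360000) 5 0 2 1 1 + T (4320000) 5 0 2 2 0 + T (-360000) 5 1 1 0 2 + T (4320000) 5 2 0 0 2 + T (12960000) 6 0 2 0 2) := by
    simp only [iB, iB, toSecond, T, map_add, map_mul, map_pow, bind₁_X_right, bind₁_C_right, Fin.reduceEq, reduceIte]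
    simp only [T, Nat.reduceSub, Nat.reduceAdd, map_mul, map_pow, map_neg, map_ofNat, map_natCast, map_one, map_zero, mul_zero, zero_mul, add_zero, zero_add, neg_zero, Nat.cast_ofNat, Nat.cast_one, Nat.cast_zero]; try ring
  rw [transvectant, h0]
  simp only [Function.iterate_succ, Function.iterate_zero, Function.comp_apply, id_eq]
  rw [show Omega (T (10000) 4 1 1 1 1 + T (-120000) 4 1 1 2 0 + T (-120000) 4 2 0 1 1 + T (1440000) 4 2 0 2 0 + T (-360000) 5 0 2 1 1 + T (4320000) 5 0 2 2 0 + T (-360000) 5 1 1 0 2 + T (4320000) 5 2 0 0 2 + T (12960000) 6 0 2 0 2) = (T (10000) 4 0 1 1 0 + T (-10000) 4 1 0 0 1 + T (-17280000) 5 0 1 1 0 + T (17280000) 5 1 0 0 1) by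
    simp only [Omega, map_add, pd6T, pd7T, pd8T, pd9T]
    simp only [T, Nat.reduceSub, Nat.reduceAdd, map_mul, map_pow, map_neg, map_ofNat, map_natCast, map_one, map_zero, mul_zero, zero_mul, add_zero, zero_add, neg_zero, Nat.cast_ofNat, Nat.cast_one, Nat.cast_zero]; try ring]
  rw [show Omega (T (10000) 4 0 1 1 0 + T (-10000) 4 1 0 0 1 + T (-17280000) 5 0 1 1 0 + T (17280000) 5 1 0 0 1) = (T (-20000) 4 0 0 0 0 + T (34560000) 5 0 0 0 0) by
    simp only [Omega, map_add, pd6T, pd7T, pd8T, pd9T]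
    simp only [T, Nat.reduceSub, Nat.reduceAdd, map_mul, map_pow, map_neg, map_ofNat, map_natCast, map_one, map_zero, mul_zero, zero_mul, add_zero, zero_add, neg_zero, Nat.cast_ofNat, Nat.cast_one, Nat.cast_zero]; try ring]
  show collapse _ = _
  simp only [collapse, T, map_add, map_mul, map_pow, bind₁_X_right, bind₁_C_right, Fin.reduceEq, reduceIte]
  simp only [T, Nat.reduceSub, Nat.reduceAdd, map_mul, map_pow, map_neg, map_ofNat, map_natCast, map_one, map_zero, mul_zero, zero_mul, add_zero, zero_add, neg_zero, Nat.cast_ofNat, Nat.cast_one, Nat.cast_zero]; try ring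

lemma T4 : transvectant 2 jB jB = (T (-8000000) 6 2 0 0 0 + T (24000000) 7 0 2 0 0 + T (13824000000) 7 2 0 0 0 + T (-41472000000) 8 0 2 0 0) := by
  have h0 : (jB : MvPolynomial (Fin 10) (RatFunc ℚ)) * toSecond jB = (T (1000000) 6 2 1 2 1 + T (-8000000) 6 2 1 3 0 + T (-8000000) 6 3 0 2 1 + T (64000000) 6 3 0 3 0 + T (1000000) 7 0 3 2 1 + T (-8000000) 7 0 3 3 0 + T (-72000000) 7 1 2 2 1 + T (576000000) 7 1 2 3 0 + T (1000000) 7 2 1 0 3 + T (-72000000) 7 2 1 1 2 + T (-8000000) 7 3 0 0 3 + T (576000000) 7 3 0 1 2 + T (1000000) 8 0 3 0 3 + T (-72000000) 8 0 3 1 2 + T (-72000000) 8 1 2 0 3 + T (5184000000) 8 1 2 1 2) := by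
    simp only [jB, jB, toSecond, T, map_add, map_mul, map_pow, bind₁_X_right, bind₁_C_right, Fin.reduceEq, reduceIte]
    simp only [T, Nat.reduceSub, Nat.reduceAdd, map_mul, map_pow, map_neg, map_ofNat, map_natCast, map_one, map_zero, mul_zero, zero_mul, add_zero, zero_add, neg_zero, Nat.cast_ofNat, Nat.cast_one, Nat.cast_zero]; try ring
  rw [transvectant, h0]
  simp only [Function.iterate_succ, Function.iterate_zero, Function.comp_apply, id_eq]
  rw [show Omega (T (1000000) 6 2 1 2 1 + T (-8000000) 6 2 1 3 0 + T (-8000000) 6 3 0 2 1 + T (64000000) 6 3 0 3 0 + T (1000000) 7 0 3 2 1 + T (-8000000) 7 0 3 3 0 + T (-72000000) 7 1 2 2 1 + T (576000000) 7 1 2 3 0 + T (1000000) 7 2 1 0 3 + T (-72000000) 7 2 1 1 2 + T (-8000000) 7 3 0 0 3 + T (576000000) 7 3 0 1 2 + T (1000000) 8 0 3 0 3 + T (-72000000) 8 0 3 1 2 + T (-72000000) 8 1 2 0 3 + T (5184000000) 8 1 2 1 2) = (T (2000000) 6 1 1 2 0 + T (-2000000) 6 2 0 1 1 + T (-6000000)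 7 0 2 1 1 + T (6000000) 7 1 1 0 2 + T (-3456000000) 7 1 1 2 0 + T (3456000000) 7 2 0 1 1 + T (10368000000) 8 0 2 1 1 + T (-10368000000) 8 1 1 0 2) by
    simp only [Omega, map_add, pd6T, pd7T, pd8T, pd9T]
    simp only [T, Nat.reduceSub, Nat.reduceAdd, map_mul, map_pow, map_neg, map_ofNat, map_natCast, map_one, map_zero, mul_zero, zero_mul, add_zero, zero_add, neg_zero, Nat.cast_ofNat, Nat.cast_one, Nat.cast_zero]; try ring]
  rw [show Omega (T (2000000) 6 1 1 2 0 + T (-2000000) 6 2 0 1 1 + T (-6000000) 7 0 2 1 1 + T (6000000) 7 1 1 0 2 + T (-3456000000) 7 1 1 2 0 + T (3456000000) 7 2 0 1 1 + T (10368000000) 8 0 2 1 1 + T (-10368000000) 8 1 1 0 2) = (T (-8000000) 6 1 0 1 0 + T (24000000) 7 0 1 0 1 + T (13824000000) 7 1 0 1 0 + T (-41472000000) 8 0 1 0 1) by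
    simp only [Omega, map_add, pd6T, pd7T, pd8T, pd9T]
    simp only [T, Nat.reduceSub, Nat.reduceAdd, map_mul, map_pow, map_neg, map_ofNat, map_natCast, map_one, map_zero, mul_zero, zero_mul, add_zero, zero_add, neg_zero, Nat.cast_ofNat, Nat.cast_one, Nat.cast_zero]; try ring]
  show collapse _ = _
  simp only [collapse, T, map_add, map_mul, map_pow, bind₁_X_right, bind₁_C_right, Fin.reduceEq, reduceIte]
  simp only [T, Nat.reduceSub, Nat.reduceAdd, map_mul, map_pow, map_neg, map_ofNat, map_natCast, map_one, map_zero, mul_zero, zero_mul, add_zero, zero_add, neg_zero, Nat.cast_ofNat, Nat.cast_one, Nat.cast_zero]; try ring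

lemma T5 : transvectant 2 tB iB = (0 : MvPolynomial (Fin 10) (RatFunc ℚ)) := by
  have h0 : (tB : MvPolynomial (Fin 10) (RatFunc ℚ)) * toSecond iB = (T (50000000) 8 2 0 1 1 + T (-600000000) 8 2 0 2 0 + T (-150000000) 9 0 2 1 1 + T (1800000000) 9 0 2 2 0 + T (-1800000000) 9 2 0 0 2 + T (-86400000000) 9 2 0 1 1 + T (1036800000000) 9 2 0 2 0 + T (5400000000) 10 0 2 0 2 + T (259200000000) 10 0 2 1 1 + T (-3110400000000) 10 0 2 2 0 + T (3110400000000) 10 2 0 0 2 + T (-9331200000000) 11 0 2 0 2) := by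
    simp only [tB, iB, toSecond, T, map_add, map_mul, map_pow, bind₁_X_right, bind₁_C_right, Fin.reduceEq, reduceIte]
    simp only [T, Nat.reduceSub, Nat.reduceAdd, map_mul, map_pow, map_neg, map_ofNat, map_natCast, map_one, map_zero, mul_zero, zero_mul, add_zero, zero_add, neg_zero, Nat.cast_ofNat, Nat.cast_one, Nat.cast_zero]; try ring
  rw [transvectant, h0]
  simp only [Function.iterate_succ, Function.iterate_zero, Function.comp_apply, id_eq]
  rw [show Omega (T (50000000) 8 2 0 1 1 + T (-600000000) 8 2 0 2 0 + T (-150000000) 9 0 2 1 1 + T (1800000000) 9 0 2 2 0 + T (-1800000000) 9 2 0 0 2 + T (-86400000000) 9 2 0 1 1 + T (1036800000000) 9 2 0 2 0 + T (5400000000) 10 0 2 0 2 + T (259200000000) 10 0 2 1 1 + T (-3110400000000) 10 0 2 2 0 + T (3110400000000) 10 2 0 0 2 + T (-9331200000000) 11 0 2 0 2) = (T (100000000) 8 1 0 1 0 + T (300000000) 9 0 1 0 1 + T (-7200000000) 9 0 1 1 0 + T (-7200000000) 9 1 0 0 1 + T (-172800000000) 9 1 0 1 0 + T (-518400000000) 10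 0 1 0 1 + T (12441600000000) 10 0 1 1 0 + T (12441600000000) 10 1 0 0 1) by
    simp only [Omega, map_add, pd6T, pd7T, pd8T, pd9T]
    simp only [T, Nat.reduceSub, Nat.reduceAdd, map_mul, map_pow, map_neg, map_ofNat, map_natCast, map_one, map_zero, mul_zero, zero_mul, add_zero, zero_add, neg_zero, Nat.cast_ofNat, Nat.cast_one, Nat.cast_zero]; try ring]
  rw [show Omega (T (100000000) 8 1 0 1 0 + T (300000000) 9 0 1 0 1 + T (-7200000000) 9 0 1 1 0 + T (-7200000000) 9 1 0 0 1 + T (-172800000000) 9 1 0 1 0 + T (-518400000000) 10 0 1 0 1 + T (12441600000000) 10 0 1 1 0 + T (12441600000000) 10 1 0 0 1) = (0 : MvPolynomial (Fin 10) (RatFunc ℚ)) by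
    simp only [Omega, map_add, pd6T, pd7T, pd8T, pd9T]
    simp only [T, Nat.reduceSub, Nat.reduceAdd, map_mul, map_pow, map_neg, map_ofNat, map_natCast, map_one, map_zero, mul_zero, zero_mul, add_zero, zero_add, neg_zero, Nat.cast_ofNat, Nat.cast_one, Nat.cast_zero]; try ring]
  show collapse _ = _
  simp only [collapse, T, map_add, map_mul, map_pow, bind₁_X_right, bind₁_C_right, Fin.reduceEq, reduceIte]
  simp only [T, Nat.reduceSub, Nat.reduceAdd, map_mul, map_pow, map_neg, map_ofNat, map_natCast, map_one, map_zero, mul_zero, zero_mul, add_zero, zero_add, neg_zero, Nat.cast_ofNat, Nat.cast_one, Nat.cast_zero]; try ring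

lemma T6 : transvectant 2 tB tB = (T (-6000000000000) 13 0 0 0 0 + T (20736000000000000) 14 0 0 0 0 + T (-17915904000000000000) 15 0 0 0 0) := by
  have h0 : (tB : MvPolynomial (Fin 10) (RatFunc ℚ)) * toSecond tB = (T (250000000000) 12 2 0 2 0 + T (-750000000000) 13 0 2 2 0 + T (-750000000000) 13 2 0 0 2 + T (-864000000000000) 13 2 0 2 0 + T (2250000000000) 14 0 2 0 2 + T (2592000000000000) 14 0 2 2 0 + T (2592000000000000) 14 2 0 0 2 + T (746496000000000000) 14 2 0 2 0 + T (-7776000000000000) 15 0 2 0 2 + T (-2239488000000000000) 15 0 2 2 0 + T (-2239488000000000000) 15 2 0 0 2 + T (6718464000000000000) 16 0 2 0 2) := by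
    simp only [tB, tB, toSecond, T, map_add, map_mul, map_pow, bind₁_X_right, bind₁_C_right, Fin.reduceEq, reduceIte]
    simp only [T, Nat.reduceSub, Nat.reduceAdd, map_mul, map_pow, map_neg, map_ofNat, map_natCast, map_one, map_zero, mul_zero, zero_mul, add_zero, zero_add, neg_zero, Nat.cast_ofNat, Nat.cast_one, Nat.cast_zero]; try ring
  rw [transvectant, h0]
  simp only [Function.iterate_succ, Function.iterate_zero, Function.comp_apply, id_eq]
  rw [show Omega (T (250000000000) 12 2 0 2 0 + T (-750000000000) 13 0 2 2 0 + T (-750000000000) 13 2 0 0 2 + T (-864000000000000) 13 2 0 2 0 + T (2250000000000) 14 0 2 0 2 + T (2592000000000000) 14 0 2 2 0 + T (2592000000000000) 14 2 0 0 2 + T (746496000000000000) 14 2 0 2 0 + T (-7776000000000000) 15 0 2 0 2 + T (-2239488000000000000) 15 0 2 2 0 + T (-2239488000000000000) 15 2 0 0 2 + T (6718464000000000000) 16 0 2 0 2) = (T (3000000000000) 13 0 1 1 0 + T (-3000000000000) 13 1 0 0 1 + T (-10368000000000000) 14 0 1 1 0 + T (10368000000000000) 14 1 0 0 1 + T (8957952000000000000)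 15 0 1 1 0 + T (-8957952000000000000) 15 1 0 0 1) by
    simp only [Omega, map_add, pd6T, pd7T, pd8T, pd9T]
    simp only [T, Nat.reduceSub, Nat.reduceAdd, map_mul, map_pow, map_neg, map_ofNat, map_natCast, map_one, map_zero, mul_zero, zero_mul, add_zero, zero_add, neg_zero, Nat.cast_ofNat, Nat.cast_one, Nat.cast_zero]; try ring]
  rw [show Omega (T (3000000000000) 13 0 1 1 0 + T (-3000000000000) 13 1 0 0 1 + T (-10368000000000000) 14 0 1 1 0 + T (10368000000000000) 14 1 0 0 1 + T (8957952000000000000) 15 0 1 1 0 + T (-8957952000000000000) 15 1 0 0 1) = (T (-6000000000000) 13 0 0 0 0 + T (20736000000000000) 14 0 0 0 0 + T (-17915904000000000000) 15 0 0 0 0) by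
    simp only [Omega, map_add, pd6T, pd7T, pd8T, pd9T]
    simp only [T, Nat.reduceSub, Nat.reduceAdd, map_mul, map_pow, map_neg, map_ofNat, map_natCast, map_one, map_zero, mul_zero, zero_mul, add_zero, zero_add, neg_zero, Nat.cast_ofNat, Nat.cast_one, Nat.cast_zero]; try ring]
  show collapse _ = _
  simp only [collapse, T, map_add, map_mul, map_pow, bind₁_X_right, bind₁_C_right, Fin.reduceEq, reduceIte]
  simp only [T, Nat.reduceSub, Nat.reduceAdd, map_mul, map_pow, map_neg, map_ofNat, map_natCast, map_one, map_zero, mul_zero, zero_mul, add_zero, zero_add, neg_zero, Nat.cast_ofNat, Nat.cast_one, Nat.cast_zero]; try ring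
instance : CharZero (RatFunc ℚ) :=
  charZero_of_injective_algebraMap (RatFunc.algebraMap_injective ℚ)

lemma Cinv_mul (a : RatFunc ℚ) (ha : a ≠ 0) (w z : MvPolynomial (Fin 10) (RatFunc ℚ)) :
    C a⁻¹ * w = z ↔ w = C a * z := by
  rw [C_mul', C_mul', inv_smul_eq_iff₀ ha]

lemma C_mul_T (b a : RatFunc ℚ) (k e1 e2 e3 e4 : ℕ) :
    C b * T a k e1 e2 e3 e4 = T (b * a) k e1 e2 e3 e4 := by
  simp [T]; ring

lemma negT (a : RatFunc ℚ) (k e1 e2 e3 e4 : ℕ) :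
    -T a k e1 e2 e3 e4 = T (-a) k e1 e2 e3 e4 := by
  simp [T]

lemma Sgen : bind₁ br (genQuintic (K := RatFunc ℚ)) = fB := by
  simp only [genQuintic, map_add, map_mul, map_pow, bind₁_X_right, br, Fin.reduceEq, reduceIte]
  simp only [fB, T, map_mul, map_pow, map_neg, map_ofNat, map_natCast, map_one, map_zero,
    Nat.cast_ofNat, pow_zero, pow_one, mul_one, one_mul]
  ring

lemma SI : bind₁ br (covI (K := RatFunc ℚ)) = iB := by
  rw [covI, map_mul, bind₁_C_right, S_transv, Sgen, T1, Cinv_mul _ (by norm_num)]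
  simp only [iB, mul_add, C_mul_T]
  norm_num

lemma SJ : bind₁ br (covJ (K := RatFunc ℚ)) = jB := by
  rw [covJ, map_neg, map_mul, bind₁_C_right, S_transv, Sgen, SI, T2,
    neg_eq_iff_eq_neg, Cinv_mul _ (by norm_num)]
  simp only [jB, mul_add, C_mul_T, neg_add, mul_neg, negT]
  norm_num

lemma SA : bind₁ br (invA (K := RatFunc ℚ)) =
    T (-625) 4 0 0 0 0 + T 1080000 5 0 0 0 0 := by
  rw [invA, map_mul, bind₁_C_right, S_transv, SI, T3, Cinv_mul _ (by norm_num)]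
  simp only [mul_add, C_mul_T]
  norm_num

lemma Stau : bind₁ br (covTau (K := RatFunc ℚ)) = tB := by
  rw [covTau, map_mul, bind₁_C_right, S_transv, SJ, T4, Cinv_mul _ (by norm_num)]
  simp only [tB, mul_add, C_mul_T]
  norm_num

lemma SB : bind₁ br (invB (K := RatFunc ℚ)) = 0 := by
  rw [invB, map_mul, bind₁_C_right, S_transv, Stau, SI, T5, mul_zero]

lemma SD : bind₁ br (invDelta (K := RatFunc ℚ)) =
    T 3125 8 0 0 0 0 + T (-10800000) 9 0 0 0 0 + T 9331200000 10 0 0 0 0 := by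
  rw [invDelta]
  simp only [map_mul, map_sub, map_pow, map_ofNat, bind₁_C_right, SA, SB, mul_zero, sub_zero]
  rw [Cinv_mul _ (by norm_num)]
  simp only [T, map_mul, map_pow, map_neg, map_ofNat, map_natCast, map_one, map_zero,
    Nat.cast_ofNat, pow_zero, mul_one, one_mul]
  ring

lemma SC : bind₁ br (invC (K := RatFunc ℚ)) =
    T (-1000000000000) 13 0 0 0 0 + T 3456000000000000 14 0 0 0 0 +
      T (-2985984000000000000) 15 0 0 0 0 := by
  rw [invC, map_mul, bind₁_C_right, S_transv, Stau, T6, Cinv_mul _ (by norm_num)]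
  simp only [mul_add, C_mul_T]
  norm_num

lemma SM : bind₁ br (invM (K := RatFunc ℚ)) =
    T (-10000000000) 12 0 0 0 0 + T 52200000000000 13 0 0 0 0 +
      T (-90823680000000000) 14 0 0 0 0 + T 52672757760000000000 15 0 0 0 0 := by
  rw [invM]
  simp only [map_mul, map_add, map_neg, map_pow, map_ofNat, bind₁_C_right, SC, SA, SD, SB]
  rw [Cinv_mul _ (by norm_num)]
  simp only [T, map_mul, map_pow, map_neg, map_ofNat, map_natCast, map_one, map_zero,
    Nat.cast_ofNat, pow_zero, mul_one, one_mul]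
  ring

lemma eval_T (v : Fin 10 → RatFunc ℚ) (a : RatFunc ℚ) (k e1 e2 e3 e4 : ℕ) :
    eval v (T a k e1 e2 e3 e4) = a * Qc^k * (v 6)^e1 * (v 7)^e2 * (v 8)^e3 * (v 9)^e4 := by
  simp [T]

lemma lin1728 : (1728 : RatFunc ℚ) * RatFunc.X - 1 ≠ 0 := by
  have hp : ((1728 : Polynomial ℚ) * Polynomial.X - 1) ≠ 0 := by
    intro h
    have := congrArg (Polynomial.eval 0) h
    simp at this
  intro h
  apply hp
  apply RatFunc.algebraMap_injective ℚ
  rw [map_zero, map_sub, map_mul, map_one, map_ofNat, RatFunc.algebraMap_X]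
  exact h

lemma lin1764 : (1764 : RatFunc ℚ) * RatFunc.X - 1 ≠ 0 := by
  have hp : ((1764 : Polynomial ℚ) * Polynomial.X - 1) ≠ 0 := by
    intro h
    have := congrArg (Polynomial.eval 0) h
    simp at this
  intro h
  apply hp
  apply RatFunc.algebraMap_injective ℚ
  rw [map_zero, map_sub, map_mul, map_one, map_ofNat, RatFunc.algebraMap_X]
  exact h
/-- the Brioschi quintic x⁵ − 10c x³ + 45c² x − c² over ℚ(c) has
absolute invariants δ = 25Δ/A² = 1/5 and q = A³/(8M) = (25/8192)(1728c−1)/(1764c−1). -/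
theorem brioschi_absolute_invariants :
    ∀ v : Fin 10 → RatFunc ℚ,
      v 0 = 1 → v 1 = 0 → v 2 = -10 * RatFunc.X → v 3 = 0 →
      v 4 = 45 * RatFunc.X ^ 2 → v 5 = -RatFunc.X ^ 2 →
      eval v (invA (K := RatFunc ℚ)) ≠ 0 ∧
      eval v (invM (K := RatFunc ℚ)) ≠ 0 ∧
      25 * eval v (invDelta (K := RatFunc ℚ)) / (eval v (invA (K := RatFunc ℚ))) ^ 2
        = 1 / 5 ∧
      (eval v (invA (K := RatFunc ℚ))) ^ 3 / (8 * eval v (invM (K := RatFunc ℚ)))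
        = 25 / 8192 * (1728 * RatFunc.X - 1) / (1764 * RatFunc.X - 1) := by
  intro v h0 h1 h2 h3 h4 h5
  have heval : ∀ p : MvPolynomial (Fin 10) (RatFunc ℚ), eval v (bind₁ br p) = eval v p := by
    intro p
    have haev : ∀ (w : Fin 10 → RatFunc ℚ) (q : MvPolynomial (Fin 10) (RatFunc ℚ)),
        eval w q = aeval w q := fun w q => by rw [← coe_aeval_eq_eval]; rfl
    rw [haev, haev, aeval_bind₁]
    have hfun : (fun i => aeval v (br i)) = v := by
      funext i
      fin_cases i <;> simp [br, Qc, h0, h1, h2, h3, h4, h5]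
    rw [hfun]
  have eA : eval v (invA (K := RatFunc ℚ)) =
      -625 * RatFunc.X ^ 4 + 1080000 * RatFunc.X ^ 5 := by
    rw [← heval, SA]
    simp [eval_T, Qc]
    try ring
  have eD : eval v (invDelta (K := RatFunc ℚ)) =
      3125 * RatFunc.X ^ 8 - 10800000 * RatFunc.X ^ 9 + 9331200000 * RatFunc.X ^ 10 := by
    rw [← heval, SD]
    simp [eval_T, Qc]
    try ring
  have eM : eval v (invM (K := RatFunc ℚ)) =
      -10000000000 * RatFunc.X ^ 12 + 52200000000000 * RatFunc.X ^ 13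
        - 90823680000000000 * RatFunc.X ^ 14 + 52672757760000000000 * RatFunc.X ^ 15 := by
    rw [← heval, SM]
    simp [eval_T, Qc]
    try ring
  have hA0 : eval v (invA (K := RatFunc ℚ)) ≠ 0 := by
    rw [eA, show (-625 * RatFunc.X ^ 4 + 1080000 * RatFunc.X ^ 5 : RatFunc ℚ)
      = 625 * RatFunc.X ^ 4 * (1728 * RatFunc.X - 1) by ring]
    exact mul_ne_zero (mul_ne_zero (by norm_num) (pow_ne_zero _ RatFunc.X_ne_zero)) lin1728
  have hM0 : eval v (invM (K := RatFunc ℚ)) ≠ 0 := by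
    rw [eM, show (-10000000000 * RatFunc.X ^ 12 + 52200000000000 * RatFunc.X ^ 13
        - 90823680000000000 * RatFunc.X ^ 14 + 52672757760000000000 * RatFunc.X ^ 15 : RatFunc ℚ)
      = 10000000000 * RatFunc.X ^ 12 * (1728 * RatFunc.X - 1) ^ 2 * (1764 * RatFunc.X - 1) by
        ring]
    exact mul_ne_zero (mul_ne_zero (mul_ne_zero (by norm_num)
      (pow_ne_zero _ RatFunc.X_ne_zero)) (pow_ne_zero _ lin1728)) lin1764
  have hA0' := hA0
  have hM0' := hM0
  rw [eA] at hA0'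
  rw [eM] at hM0'
  refine ⟨hA0, hM0, ?_, ?_⟩
  · rw [eA, eD]
    rw [div_eq_div_iff (pow_ne_zero 2 hA0') (by norm_num : (5 : RatFunc ℚ) ≠ 0)]
    ring
  · rw [eA, eM]
    rw [div_eq_div_iff (mul_ne_zero (by norm_num) hM0') lin1764]
    ring
end

section
/- The generic binary quintic f = a₀x⁵ + … + a₅y⁵, viewed as the polynomial f(x,1) of degree 5 over the field ℚ(a₀,…,a₅), has splitting field with Galois group isomorphic to the symmetric group S₅. -/
open Polynomial

/-- The field ℚ(a₀,…,a₅) of rational functions in six indeterminates. -/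
abbrev QA : Type := FractionRing (MvPolynomial (Fin 6) ℚ)

/-- The generic quintic f(x,1) = a₀x⁵ + a₁x⁴ + a₂x³ + a₃x² + a₄x + a₅
as a polynomial over ℚ(a₀,…,a₅). -/
noncomputable def genericQuintic : Polynomial QA :=
  ∑ k : Fin 6,
    C (algebraMap (MvPolynomial (Fin 6) ℚ) QA (MvPolynomial.X k)) * X ^ (5 - (k : ℕ))

open MvPolynomial in
section
abbrev Bq : Type := MvPolynomial (Fin 5) (Polynomial ℚ)
abbrev Lq : Type := FractionRing Bq

noncomputable def uu : Bq := MvPolynomial.C Polynomial.X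

noncomputable def wfam (k : Fin 6) : Bq := uu * MvPolynomial.esymm (Fin 5) (Polynomial ℚ) (k : ℕ)

noncomputable def psi0 : MvPolynomial (Fin 6) ℚ →ₐ[ℚ] Bq := MvPolynomial.aeval wfam

-- scaling map
noncomputable def gmma : Bq →ₐ[Polynomial ℚ] Bq :=
  MvPolynomial.aeval (fun i : Fin 5 => uu * MvPolynomial.X i)

noncomputable def eps : Bq →ₐ[Polynomial ℚ] Bq :=
  MvPolynomial.aeval (fun i : Fin 5 => MvPolynomial.esymm (Fin 5) (Polynomial ℚ) ((i : ℕ) + 1))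

example : True := trivial
end
open MvPolynomial

lemma uu_ne_zero : uu ≠ 0 := fun h => by
  simpa [uu] using (MvPolynomial.C_eq_zero.mp h)

lemma eps_injective : Function.Injective eps := by
  have h5 : 5 ≤ Fintype.card (Fin 5) := by simp
  have h := MvPolynomial.esymmAlgHom_injective (σ := Fin 5) (n := 5) (Polynomial ℚ) h5
  intro a b hab
  apply h
  apply Subtype.val_injective
  rw [MvPolynomial.esymmAlgHom_apply, MvPolynomial.esymmAlgHom_apply]
  exact hab

noncomputable def dlta : Bq →+* Lq :=
  MvPolynomial.eval₂Hom ((algebraMap Bq Lq).comp (MvPolynomial.C))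
    (fun i => algebraMap Bq Lq (MvPolynomial.X i) * (algebraMap Bq Lq uu)⁻¹)

lemma dlta_comp : dlta.comp (gmma.toRingHom) = algebraMap Bq Lq := by
  apply MvPolynomial.ringHom_ext
  · intro f
    simp [dlta, gmma, MvPolynomial.aeval_C, MvPolynomial.algebraMap_eq]
  · intro i
    have hu : algebraMap Bq Lq uu ≠ 0 := fun h =>
      uu_ne_zero (IsFractionRing.injective Bq Lq (by simpa using h))
    have : gmma (MvPolynomial.X i) = uu * MvPolynomial.X i := by simp [gmma]
    simp only [RingHom.comp_apply, AlgHom.toRingHom_eq_coe, RingHom.coe_coe, this]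
    rw [map_mul]
    have huu : dlta uu = algebraMap Bq Lq uu := by
      simp [dlta, uu]
    rw [huu]
    simp only [dlta, MvPolynomial.eval₂Hom_X']
    field_simp

lemma gmma_injective : Function.Injective gmma := by
  have h : Function.Injective (dlta.comp (gmma.toRingHom)) := by
    rw [dlta_comp]; exact IsFractionRing.injective Bq Lq
  have h2 : Function.Injective (⇑dlta ∘ ⇑gmma) := by
    intro a b hab; exact h hab
  exact Function.Injective.of_comp h2

noncomputable def bta : MvPolynomial (Fin 6) ℚ ≃ₐ[ℚ] Bq :=
  (MvPolynomial.renameEquiv ℚ (finSuccEquiv 5)).trans (MvPolynomial.optionEquivRight ℚ (Fin 5))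

lemma psi0_eq :
    psi0 = ((eps.restrictScalars ℚ).comp (gmma.restrictScalars ℚ)).comp bta.toAlgHom := by
  apply MvPolynomial.algHom_ext
  intro k
  induction k using Fin.cases with
  | zero =>
    have hb : bta (MvPolynomial.X (0 : Fin 6)) = uu := by
      simp [bta, uu, MvPolynomial.optionEquivRight_X_none]
    have hg : gmma uu = uu := by
      simpa [uu, MvPolynomial.algebraMap_eq] using gmma.commutes Polynomial.X
    have he : eps uu = uu := by
      simpa [uu, MvPolynomial.algebraMap_eq] using eps.commutes Polynomial.X
    simp [psi0, wfam, hb, hg, he, MvPolynomial.esymm_zero]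
  | succ i =>
    have hb : bta (MvPolynomial.X (Fin.succ i)) = MvPolynomial.X i := by
      simp [bta, MvPolynomial.optionEquivRight_X_some]
    have hg : gmma (MvPolynomial.X i) = uu * MvPolynomial.X i := by simp [gmma]
    have he : eps uu = uu := by
      simpa [uu, MvPolynomial.algebraMap_eq] using eps.commutes Polynomial.X
    have hes : eps (MvPolynomial.X i) = MvPolynomial.esymm (Fin 5) (Polynomial ℚ) ((i:ℕ)+1) := by
      simp [eps]
    simp only [psi0, MvPolynomial.aeval_X, wfam, AlgHom.comp_apply, AlgEquiv.toAlgHom_eq_coe,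
      AlgHom.coe_coe, AlgHom.coe_restrictScalars']
    rw [show (bta : MvPolynomial (Fin 6) ℚ →ₐ[ℚ] Bq) (MvPolynomial.X i.succ) = MvPolynomial.X i from hb,
      hg, map_mul, he, hes, Fin.val_succ]

lemma psi0_injective : Function.Injective psi0 := by
  rw [psi0_eq]
  intro a b hab
  exact bta.injective (gmma_injective (eps_injective hab))

noncomputable def psiTot : MvPolynomial (Fin 6) ℚ →+* Lq :=
  (algebraMap Bq Lq).comp psi0.toRingHom

lemma psiTot_injective : Function.Injective psiTot := by
  intro a b hab
  exact psi0_injective (IsFractionRing.injective Bq Lq hab)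

noncomputable def phi : QA →+* Lq := IsFractionRing.lift psiTot_injective

noncomputable instance : Algebra QA Lq := phi.toAlgebra

lemma algebraMap_QA_Lq (x : MvPolynomial (Fin 6) ℚ) :
    algebraMap QA Lq (algebraMap (MvPolynomial (Fin 6) ℚ) QA x) =
      algebraMap Bq Lq (psi0 x) := by
  exact IsFractionRing.lift_algebraMap psiTot_injective x

noncomputable def tt (i : Fin 5) : Lq := algebraMap Bq Lq (MvPolynomial.X i)

noncomputable def uL : Lq := algebraMap Bq Lq uu

lemma uL_ne_zero : uL ≠ 0 := fun h =>
  uu_ne_zero (IsFractionRing.injective Bq Lq (by simpa [uL] using h))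

lemma prodBq :
    (∏ i : Fin 5, (Polynomial.X + Polynomial.C (MvPolynomial.X i : Bq))) =
      ∑ j ∈ Finset.range 6,
        Polynomial.C (MvPolynomial.esymm (Fin 5) (Polynomial ℚ) j) * Polynomial.X ^ (5 - j) := by
  have := MvPolynomial.prod_C_add_X_eq_sum_esymm (Polynomial ℚ) (Fin 5)
  simpa using this

lemma hmap :
    genericQuintic.map (algebraMap QA Lq) =
      Polynomial.C uL * ∏ i : Fin 5, (Polynomial.X + Polynomial.C (tt i)) := by
  have hR : (∏ i : Fin 5, (Polynomial.X + Polynomial.C (tt i))) =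
      Polynomial.map (algebraMap Bq Lq)
        (∏ i : Fin 5, (Polynomial.X + Polynomial.C (MvPolynomial.X i : Bq))) := by
    rw [Polynomial.map_prod]
    simp [tt]
  rw [hR, prodBq, Polynomial.map_sum]
  rw [genericQuintic, Polynomial.map_sum]
  rw [Finset.mul_sum]
  rw [Finset.sum_range (n := 6)]
  apply Finset.sum_congr rfl
  intro k _
  have hx : psi0 (MvPolynomial.X k) = uu * MvPolynomial.esymm (Fin 5) (Polynomial ℚ) (k : ℕ) := by
    simp [psi0, wfam]
  rw [Polynomial.map_mul, Polynomial.map_mul, Polynomial.map_C, Polynomial.map_C,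
    Polynomial.map_pow, Polynomial.map_pow, Polynomial.map_X, Polynomial.map_X,
    algebraMap_QA_Lq, hx, map_mul, Polynomial.C_mul, uL]
  ring

lemma prod_eq_sub : (∏ i : Fin 5, (Polynomial.X + Polynomial.C (tt i))) =
    ∏ i : Fin 5, (Polynomial.X - Polynomial.C (-(tt i))) := by
  refine Finset.prod_congr rfl fun i _ => ?_
  rw [Polynomial.C_neg, sub_neg_eq_add]

lemma genericQuintic_splits : (genericQuintic.map (algebraMap QA Lq)).Splits := by
  rw [hmap, prod_eq_sub]
  exact (Polynomial.Splits.prod fun i _ => Polynomial.Splits.X_sub_C _).C_mul _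

lemma neg_tt_injective : Function.Injective (fun i : Fin 5 => -(tt i)) := by
  intro i j h
  simp only [neg_inj, tt] at h
  exact MvPolynomial.X_injective (IsFractionRing.injective Bq Lq h)

lemma roots_map :
    (genericQuintic.map (algebraMap QA Lq)).roots =
      Finset.univ.val.map (fun i : Fin 5 => -(tt i)) := by
  rw [hmap, prod_eq_sub, Polynomial.roots_C_mul _ uL_ne_zero]
  have : (∏ i : Fin 5, (Polynomial.X - Polynomial.C (-(tt i)))) =
      ((Finset.univ.val.map fun i : Fin 5 => -(tt i)).map fun a => Polynomial.X - Polynomial.C a).prod := by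
    rw [Multiset.map_map, Finset.prod_eq_multiset_prod]
    rfl
  rw [this, Polynomial.roots_multiset_prod_X_sub_C]

lemma genericQuintic_ne_zero : genericQuintic ≠ 0 := by
  intro h
  have : genericQuintic.map (algebraMap QA Lq) = 0 := by rw [h, Polynomial.map_zero]
  rw [hmap] at this
  rcases mul_eq_zero.mp this with h1 | h2
  · exact uL_ne_zero (by simpa using h1)
  · have := Polynomial.monic_prod_of_monic Finset.univ
      (fun i : Fin 5 => Polynomial.X + Polynomial.C (tt i))
      (fun i _ => Polynomial.monic_X_add_C (tt i))
    exact this.ne_zero h2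

lemma card_rootSet : Fintype.card (genericQuintic.rootSet Lq) = 5 := by
  classical
  have hnodup : ((genericQuintic.map (algebraMap QA Lq)).roots).Nodup := by
    rw [roots_map]
    exact Multiset.Nodup.map neg_tt_injective Finset.univ.nodup
  rw [← Set.toFinset_card]
  have h1 : (genericQuintic.rootSet Lq).toFinset =
      (genericQuintic.map (algebraMap QA Lq)).roots.toFinset := by
    ext x
    simp [Polynomial.rootSet_def, Polynomial.aroots_def]
  rw [h1, Multiset.toFinset_card_of_nodup hnodup, roots_map, Multiset.card_map]
  rfl

lemma uL_mem :
    uL ∈ IntermediateField.adjoin QA (genericQuintic.rootSet Lq) := by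
  have h0 : psi0 (MvPolynomial.X (0 : Fin 6)) = uu := by
    simp [psi0, wfam, MvPolynomial.esymm_zero]
  have : uL = algebraMap QA Lq (algebraMap (MvPolynomial (Fin 6) ℚ) QA (MvPolynomial.X 0)) := by
    rw [algebraMap_QA_Lq, h0, uL]
  rw [this]
  exact IntermediateField.algebraMap_mem _ _

lemma neg_tt_mem_rootSet (i : Fin 5) : -(tt i) ∈ genericQuintic.rootSet Lq := by
  classical
  rw [Polynomial.rootSet_def, Polynomial.aroots_def]
  simp only [Finset.mem_coe, Multiset.mem_toFinset]
  rw [roots_map, Multiset.mem_map]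
  exact ⟨i, Finset.mem_univ_val _, rfl⟩

lemma tt_mem (i : Fin 5) :
    tt i ∈ IntermediateField.adjoin QA (genericQuintic.rootSet Lq) := by
  have := IntermediateField.subset_adjoin QA (genericQuintic.rootSet Lq) (neg_tt_mem_rootSet i)
  simpa using neg_mem this

lemma mem_adjoin (b : Bq) :
    algebraMap Bq Lq b ∈ IntermediateField.adjoin QA (genericQuintic.rootSet Lq) := by
  induction b using MvPolynomial.induction_on with
  | C f =>
    induction f using Polynomial.induction_on with
    | C q =>
      have h := eq_ratCast ((algebraMap Bq Lq).comp
          ((MvPolynomial.C : Polynomial ℚ →+* Bq).comp (Polynomial.C : ℚ →+* Polynomial ℚ))) q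
      rw [RingHom.comp_apply, RingHom.comp_apply] at h
      rw [h]
      exact SubfieldClass.ratCast_mem _ q
    | add f g hf hg =>
      rw [map_add, RingHom.map_add]
      exact add_mem hf hg
    | monomial n a ha =>
      have : (MvPolynomial.C (Polynomial.C a * Polynomial.X ^ (n + 1)) : Bq) =
          MvPolynomial.C (Polynomial.C a * Polynomial.X ^ n) * uu := by
        rw [uu, ← map_mul]
        ring_nf
      rw [this, RingHom.map_mul]
      exact mul_mem ha uL_mem
  | add p q hp hq =>
    rw [RingHom.map_add]
    exact add_mem hp hq
  | mul_X p i hp =>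
    rw [RingHom.map_mul]
    exact mul_mem hp (tt_mem i)

lemma adjoin_top : IntermediateField.adjoin QA (genericQuintic.rootSet Lq) = ⊤ := by
  rw [eq_top_iff]
  intro x _
  obtain ⟨a, b, -, rfl⟩ := IsFractionRing.div_surjective (A := Bq) x
  exact div_mem (mem_adjoin a) (mem_adjoin b)

instance genericQuintic_isSplittingField : Polynomial.IsSplittingField QA Lq genericQuintic := by
  refine ⟨genericQuintic_splits, ?_⟩
  have halg : ∀ x ∈ genericQuintic.rootSet Lq, IsAlgebraic QA x := fun x hx =>
    ⟨genericQuintic, genericQuintic_ne_zero, (Polynomial.mem_rootSet'.mp hx).2⟩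
  rw [← IntermediateField.adjoin_toSubalgebra_of_isAlgebraic halg, adjoin_top]
  rfl

noncomputable def Fperm (π : Equiv.Perm (Fin 5)) : Lq ≃+* Lq :=
  IsFractionRing.ringEquivOfRingEquiv
    (MvPolynomial.renameEquiv (Polynomial ℚ) π).toRingEquiv

lemma Fperm_algebraMap (π : Equiv.Perm (Fin 5)) (b : Bq) :
    Fperm π (algebraMap Bq Lq b) = algebraMap Bq Lq (MvPolynomial.rename π b) := by
  simpa [Fperm] using IsFractionRing.ringEquivOfRingEquiv_algebraMap
    (MvPolynomial.renameEquiv (Polynomial ℚ) π).toRingEquiv b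

lemma rename_psi0 (π : Equiv.Perm (Fin 5)) (x : MvPolynomial (Fin 6) ℚ) :
    MvPolynomial.rename π (psi0 x) = psi0 x := by
  have h : ((MvPolynomial.rename (R := Polynomial ℚ) π).restrictScalars ℚ).comp psi0 = psi0 := by
    apply MvPolynomial.algHom_ext
    intro k
    have : psi0 (MvPolynomial.X k) = wfam k := by simp [psi0]
    simp only [AlgHom.comp_apply, AlgHom.coe_restrictScalars', this, wfam]
    rw [map_mul]
    have h1 : MvPolynomial.rename (R := Polynomial ℚ) π uu = uu := by
      simp [uu]
    have h2 := MvPolynomial.esymm_isSymmetric (Fin 5) (Polynomial ℚ) (k : ℕ) π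
    rw [h1, h2]
  exact DFunLike.congr_fun h x

lemma Fperm_fixes (π : Equiv.Perm (Fin 5)) (q : QA) :
    Fperm π (algebraMap QA Lq q) = algebraMap QA Lq q := by
  have h : ((Fperm π).toRingHom.comp (algebraMap QA Lq)).comp
      (algebraMap (MvPolynomial (Fin 6) ℚ) QA) =
      (algebraMap QA Lq).comp (algebraMap (MvPolynomial (Fin 6) ℚ) QA) := by
    ext x
    · simp only [RingHom.comp_apply, RingEquiv.toRingHom_eq_coe, RingHom.coe_coe,
        algebraMap_QA_Lq, Fperm_algebraMap, rename_psi0]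
    · simp only [RingHom.comp_apply, RingEquiv.toRingHom_eq_coe, RingHom.coe_coe,
        algebraMap_QA_Lq, Fperm_algebraMap, rename_psi0]
  have h2 := IsLocalization.ringHom_ext (nonZeroDivisors (MvPolynomial (Fin 6) ℚ)) h
  exact DFunLike.congr_fun h2 q

noncomputable def Theta (π : Equiv.Perm (Fin 5)) : (Lq ≃ₐ[QA] Lq) :=
  AlgEquiv.ofRingEquiv (f := Fperm π) (Fperm_fixes π)

lemma algEquiv_ext {f g : Lq ≃ₐ[QA] Lq}
    (h : ∀ b : Bq, f (algebraMap Bq Lq b) = g (algebraMap Bq Lq b)) : f = g := by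
  have h2 : (f : Lq →+* Lq).comp (algebraMap Bq Lq) = (g : Lq →+* Lq).comp (algebraMap Bq Lq) := by
    exact RingHom.ext fun b => h b
  have h3 := IsLocalization.ringHom_ext (nonZeroDivisors Bq) h2
  apply AlgEquiv.ext
  intro x
  exact DFunLike.congr_fun h3 x

noncomputable def ThetaHom : Equiv.Perm (Fin 5) →* (Lq ≃ₐ[QA] Lq) where
  toFun := Theta
  map_one' := by
    apply algEquiv_ext
    intro b
    show Fperm 1 (algebraMap Bq Lq b) = algebraMap Bq Lq b
    rw [Fperm_algebraMap]
    congr 1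
    simp
  map_mul' := fun π ρ => by
    apply algEquiv_ext
    intro b
    show Fperm (π * ρ) (algebraMap Bq Lq b) = Fperm π (Fperm ρ (algebraMap Bq Lq b))
    rw [Fperm_algebraMap, Fperm_algebraMap, Fperm_algebraMap, MvPolynomial.rename_rename]
    rfl

lemma ThetaHom_injective : Function.Injective ThetaHom := by
  intro π ρ h
  ext i
  have h0 := DFunLike.congr_fun h (tt i)
  have h2 : Fperm π (algebraMap Bq Lq (MvPolynomial.X i)) =
      Fperm ρ (algebraMap Bq Lq (MvPolynomial.X i)) := h0
  rw [Fperm_algebraMap, Fperm_algebraMap, MvPolynomial.rename_X, MvPolynomial.rename_X] at h2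
  exact congrArg Fin.val (MvPolynomial.X_injective (IsFractionRing.injective Bq Lq h2))

noncomputable def permMulEquiv {α β : Type*} (e : α ≃ β) : Equiv.Perm α ≃* Equiv.Perm β :=
  { e.permCongr with
    map_mul' := fun σ τ => by
      ext b
      simp [Equiv.permCongr_apply] }

instance factSplits : Fact (genericQuintic.map (algebraMap QA Lq)).Splits :=
  ⟨genericQuintic_splits⟩

set_option synthInstance.maxSize 512 in
/-- the Galois group of the splitting field of the generic quintic
over ℚ(a₀,…,a₅) is isomorphic to the symmetric group S₅. -/
theorem generic_quintic_galois_S5 :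
    Nonempty (genericQuintic.Gal ≃* Equiv.Perm (Fin 5)) := by
  classical
  have e : Lq ≃ₐ[QA] genericQuintic.SplittingField :=
    Polynomial.IsSplittingField.algEquiv Lq genericQuintic
  have hcard5 : Fintype.card (genericQuintic.rootSet Lq) = 5 := card_rootSet
  -- injective map from S5 into Gal
  have hinj : Function.Injective
      ((AlgEquiv.autCongr e).toMonoidHom.comp ThetaHom) := by
    intro a b hab
    exact ThetaHom_injective ((AlgEquiv.autCongr e).injective hab)
  have h120le : 120 ≤ Fintype.card genericQuintic.Gal := by
    have := Fintype.card_le_of_injective _ hinj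
    simp [Fintype.card_perm, Nat.factorial] at this
    convert this
    rfl
  -- Gal action on roots in Lq
  have hGinj := Polynomial.Gal.galActionHom_injective genericQuintic Lq
  have hcardPerm : Fintype.card (Equiv.Perm (genericQuintic.rootSet Lq)) = 120 := by
    rw [Fintype.card_perm, hcard5]
    rfl
  have hle : Fintype.card genericQuintic.Gal ≤ 120 := by
    rw [← hcardPerm]
    exact Fintype.card_le_of_injective _ hGinj
  have hcardGal : Fintype.card genericQuintic.Gal = 120 := le_antisymm hle h120le
  have hbij : Function.Bijective (Polynomial.Gal.galActionHom genericQuintic Lq) := by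
    rw [Fintype.bijective_iff_injective_and_card]
    exact ⟨hGinj, by rw [hcardGal, hcardPerm]⟩
  have eFin : genericQuintic.rootSet Lq ≃ Fin 5 := Fintype.equivFinOfCardEq hcard5
  exact ⟨(MulEquiv.ofBijective _ hbij).trans (permMulEquiv eFin)⟩
end
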